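/- arXiv:0906.2388 — 2 statements merged into one kernel-verified Lean document; each statement's English description precedes it below -/
import Mathlib

section
/- (Bose) Let P be a generic convex polygon with n ≥ 4 vertices. Then s_+ − t_+ = s_- − t_- = 2 and s_+ + t_+ + u_+ = s_- + t_- + u_- = n − 2. -/
open EuclideanGeometry
open scoped Classical

noncomputable section

/-- The Euclidean plane. -/
abbrev Pt := EuclideanSpace ℝ (Fin 2)

/-- Signed area determinant of the triangle `a b c` (positive iff `a b c` is
counterclockwise, i.e. `c` lies strictly to the left of the directed line `a → b`). -/
def det2 (a b c : Pt) : ℝ :=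
  (b 0 - a 0) * (c 1 - a 1) - (b 1 - a 1) * (c 0 - a 0)

/-- The vertices `V 0, V 1, …, V (n-1)` (indices mod `n`) are distinct and in convex
position, listed counterclockwise: every other vertex lies strictly to the left of
each directed edge. -/
def ConvexCCW {n : ℕ} (V : ZMod n → Pt) : Prop :=
  Function.Injective V ∧
    ∀ i j : ZMod n, j ≠ i → j ≠ i + 1 → 0 < det2 (V i) (V (i + 1)) (V j)

/-- The polygon is generic: no three vertices are collinear and no four vertices lie
on a common circle. -/
def GenericPoly {n : ℕ} (V : ZMod n → Pt) : Prop :=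
  (∀ i j k : ZMod n, i ≠ j → j ≠ k → i ≠ k →
      ¬ Collinear ℝ ({V i, V j, V k} : Set Pt)) ∧
  (∀ i j k l : ZMod n, i ≠ j → i ≠ k → i ≠ l → j ≠ k → j ≠ l → k ≠ l →
      ¬ ∃ (O : Pt) (R : ℝ),
        dist (V i) O = R ∧ dist (V j) O = R ∧ dist (V k) O = R ∧ dist (V l) O = R)

/-- `O i` is the center and `R i` the radius of the circle `C i` through
`V (i-1)`, `V i`, `V (i+1)`. -/
def IsCircumData {n : ℕ} (V O : ZMod n → Pt) (R : ZMod n → ℝ) : Prop :=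
  ∀ i : ZMod n,
    dist (V (i - 1)) (O i) = R i ∧ dist (V i) (O i) = R i ∧
      dist (V (i + 1)) (O i) = R i

/-- The polygon is coherent: each circumcenter `O i` lies in the closed infinite cone
with apex `V i` spanned by the rays from `V i` through `V (i-1)` and `V (i+1)`. -/
def Coherent {n : ℕ} (V O : ZMod n → Pt) : Prop :=
  ∀ i : ZMod n, ∃ s t : ℝ, 0 ≤ s ∧ 0 ≤ t ∧
    O i - V i = s • (V (i - 1) - V i) + t • (V (i + 1) - V i)

/-- `V i` is locally maximal-extremal: `V (i-2)` and `V (i+2)` lie strictly outside `C i`. -/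
def LocMax {n : ℕ} (V O : ZMod n → Pt) (R : ZMod n → ℝ) (i : ZMod n) : Prop :=
  R i < dist (V (i - 2)) (O i) ∧ R i < dist (V (i + 2)) (O i)

/-- `V i` is locally minimal-extremal: `V (i-2)` and `V (i+2)` lie strictly inside `C i`. -/
def LocMin {n : ℕ} (V O : ZMod n → Pt) (R : ZMod n → ℝ) (i : ZMod n) : Prop :=
  dist (V (i - 2)) (O i) < R i ∧ dist (V (i + 2)) (O i) < R i

/-- `V i` is globally maximal-extremal: the open disk bounded by `C i` contains no vertex. -/
def GlobMax {n : ℕ} (V O : ZMod n → Pt) (R : ZMod n → ℝ) (i : ZMod n) : Prop :=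
  ∀ j : ZMod n, R i ≤ dist (V j) (O i)

/-- `V i` is globally minimal-extremal: the open disk bounded by `C i` contains every
vertex other than `V (i-1)`, `V i`, `V (i+1)`. -/
def GlobMin {n : ℕ} (V O : ZMod n → Pt) (R : ZMod n → ℝ) (i : ZMod n) : Prop :=
  ∀ j : ZMod n, j ≠ i - 1 → j ≠ i → j ≠ i + 1 → dist (V j) (O i) < R i

/-- `V i` is radially maximal-extremal: `R (i-1) < R i > R (i+1)`. -/
def RadMax {n : ℕ} (R : ZMod n → ℝ) (i : ZMod n) : Prop :=
  R (i - 1) < R i ∧ R (i + 1) < R i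

/-- `V i` is radially minimal-extremal: `R (i-1) > R i < R (i+1)`. -/
def RadMin {n : ℕ} (R : ZMod n → ℝ) (i : ZMod n) : Prop :=
  R i < R (i - 1) ∧ R i < R (i + 1)

end

noncomputable section

/-- The circle through the three vertices indexed by `T` is empty: its open disk
contains no vertex of the polygon. -/
def EmptyCircle {n : ℕ} (V : ZMod n → Pt) (T : Finset (ZMod n)) : Prop :=
  ∃ (O : Pt) (R : ℝ), (∀ v ∈ T, dist (V v) O = R) ∧ ∀ j : ZMod n, R ≤ dist (V j) O

/-- The circle through the three vertices indexed by `T` is full: its open disk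
contains all vertices of the polygon other than those indexed by `T`. -/
def FullCircle {n : ℕ} (V : ZMod n → Pt) (T : Finset (ZMod n)) : Prop :=
  ∃ (O : Pt) (R : ℝ), (∀ v ∈ T, dist (V v) O = R) ∧
    ∀ j : ZMod n, j ∉ T → dist (V j) O < R

/-- The number of adjacent (along the polygon) pairs of indices inside `T`.
A triple is neighboring iff this number is `2`, intermediate iff it is `1`,
and disjoint iff it is `0`. -/
def adjPairs {n : ℕ} (T : Finset (ZMod n)) : ℕ :=
  {p : ZMod n × ZMod n | p.1 ∈ T ∧ p.2 ∈ T ∧ p.2 = p.1 + 1}.ncard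

end

noncomputable section
set_option linter.unusedSectionVars false

def mk2 (x y : ℝ) : Pt := (WithLp.equiv 2 (Fin 2 → ℝ)).symm ![x, y]
@[simp] lemma mk2_0 (x y : ℝ) : mk2 x y 0 = x := rfl
@[simp] lemma mk2_1 (x y : ℝ) : mk2 x y 1 = y := rfl

def d2 (x y : Pt) : ℝ := (x 0 - y 0)^2 + (x 1 - y 1)^2

lemma dist_sq (x y : Pt) : dist x y ^ 2 = d2 x y := by
  rw [EuclideanSpace.dist_eq, Real.sq_sqrt (by positivity)]
  simp [d2, Fin.sum_univ_two, Real.dist_eq, sq_abs]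

lemma d2_nonneg (x y : Pt) : 0 ≤ d2 x y := by unfold d2; positivity

lemma dist_le_iff {x y z w : Pt} : dist x y ≤ dist z w ↔ d2 x y ≤ d2 z w := by
  rw [← dist_sq, ← dist_sq]
  constructor
  · intro h; exact pow_le_pow_left₀ dist_nonneg h 2
  · intro h; nlinarith [dist_nonneg (x := x) (y := y), dist_nonneg (x := z) (y := w)]

lemma dist_lt_iff {x y z w : Pt} : dist x y < dist z w ↔ d2 x y < d2 z w := by
  rw [← not_le, ← not_le, dist_le_iff]

lemma dist_eq_iff {x y z w : Pt} : dist x y = dist z w ↔ d2 x y = d2 z w := by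
  constructor
  · intro h; rw [← dist_sq, ← dist_sq, h]
  · intro h; exact le_antisymm (dist_le_iff.2 h.le) (dist_le_iff.2 h.ge)

lemma det2_cyc (a b c : Pt) : det2 a b c = det2 b c a := by simp [det2]; ring
lemma det2_swap (a b c : Pt) : det2 a b c = - det2 a c b := by simp [det2]; ring

lemma pt_ext {x y : Pt} (h0 : x 0 = y 0) (h1 : x 1 = y 1) : x = y := by
  ext i; fin_cases i <;> assumption

lemma pt_ne {x y : Pt} (h : x ≠ y) : d2 x y ≠ 0 := by
  intro h2
  unfold d2 at h2
  exact h (pt_ext (by nlinarith [sq_nonneg (x 0 - y 0), sq_nonneg (x 1 - y 1)])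
    (by nlinarith [sq_nonneg (x 0 - y 0), sq_nonneg (x 1 - y 1)]))

-- key4 polynomial identity
lemma key4_ident (p q r x N : Pt) :
    det2 x q r * det2 x N p + det2 p x r * det2 x N q + det2 p q x * det2 x N r = 0 := by
  simp [det2]; ring
-- chunk 2: pencil machinery & crossing lemma
section
variable (A B : Pt)

/-- center of the circle through `A`,`B` at pencil parameter `s` -/
def pc (s : ℝ) : Pt :=
  mk2 ((A 0 + B 0)/2 - s * (B 1 - A 1)) ((A 1 + B 1)/2 + s * (B 0 - A 0))

/-- "power coordinate" of `x` w.r.t. the pencil through `A`,`B` -/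
def pq (x : Pt) : ℝ :=
  (x 0 - (A 0 + B 0)/2)^2 + (x 1 - (A 1 + B 1)/2)^2
    - ((A 0 - (A 0 + B 0)/2)^2 + (A 1 - (A 1 + B 1)/2)^2)

lemma pow_pc (s : ℝ) (x : Pt) :
    d2 x (pc A B s) - d2 A (pc A B s) = pq A B x - s * (2 * det2 A B x) := by
  simp [d2, pc, pq, det2]; ring

lemma pc_equidist (s : ℝ) : d2 A (pc A B s) = d2 B (pc A B s) := by
  simp [d2, pc]; ring

lemma pq_B : pq A B B = 0 := by simp [pq]; ring

lemma pq_A : pq A B A = 0 := by simp [pq]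

lemma exists_param (hAB : A ≠ B) {O : Pt} (hO : d2 A O = d2 B O) :
    ∃ s : ℝ, O = pc A B s := by
  have hD : d2 A B ≠ 0 := pt_ne hAB
  have key : (O 0 - (A 0 + B 0)/2) * (B 0 - A 0) + (O 1 - (A 1 + B 1)/2) * (B 1 - A 1) = 0 := by
    unfold d2 at hO; nlinarith [hO]
  refine ⟨((O 0 - (A 0 + B 0)/2) * (-(B 1 - A 1)) + (O 1 - (A 1 + B 1)/2) * (B 0 - A 0)) / d2 A B, ?_⟩
  unfold d2 at hD ⊢
  refine pt_ext ?_ ?_ <;> simp [pc] <;> field_simp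
  · linear_combination (2*(B 0 - A 0)) * key
  · linear_combination (2*(B 1 - A 1)) * key
end

lemma collinear_param {u v x : Pt} (huv : u ≠ v) (h : det2 u v x = 0) :
    ∃ τ : ℝ, x 0 = u 0 + τ * (v 0 - u 0) ∧ x 1 = u 1 + τ * (v 1 - u 1) := by
  unfold det2 at h
  by_cases h0 : v 0 - u 0 ≠ 0
  · refine ⟨(x 0 - u 0)/(v 0 - u 0), by field_simp; ring, ?_⟩
    field_simp
    nlinarith [h]
  · have h1 : v 1 - u 1 ≠ 0 := by
      intro h1; push_neg at h0
      exact huv (pt_ext (by linarith) (by linarith)).symm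
    refine ⟨(x 1 - u 1)/(v 1 - u 1), ?_, by field_simp; ring⟩
    field_simp
    nlinarith [h]

/-- Two chords with endpoints strictly separated by the zero set of an affine function
cannot cross; crossing is detected by `det2` signs. -/
lemma no_cross (b0 b1 b2 : ℝ) (p1 p2 q1 q2 : Pt)
    (hp1 : 0 ≤ b0 + b1 * p1 0 + b2 * p1 1) (hp2 : 0 ≤ b0 + b1 * p2 0 + b2 * p2 1)
    (hq1 : b0 + b1 * q1 0 + b2 * q1 1 ≤ 0) (hq2 : b0 + b1 * q2 0 + b2 * q2 1 < 0)
    (hd1 : 0 < det2 p1 p2 q1) (hd2 : det2 p1 p2 q2 < 0)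
    (hdp : det2 q1 q2 p1 * det2 q1 q2 p2 < 0) : False := by
  set e1 := det2 q1 q2 p1 with he1
  set e2 := det2 q1 q2 p2 with he2
  have hee : e1 - e2 ≠ 0 := by
    intro h; rw [sub_eq_zero] at h; rw [h] at hdp; nlinarith [sq_nonneg e2]
  set σ := e1 / (e1 - e2) with hσdef
  have hmul : σ * (e1 - e2) = e1 := by rw [hσdef]; field_simp
  have hσ01 : 0 ≤ σ ∧ σ ≤ 1 := by
    rcases mul_neg_iff.1 hdp with ⟨h1, h2⟩ | ⟨h1, h2⟩ <;>
      exact ⟨by nlinarith [hmul], by nlinarith [hmul]⟩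
  set z : Pt := mk2 (p1 0 + σ * (p2 0 - p1 0)) (p1 1 + σ * (p2 1 - p1 1)) with hz
  have hz1 : det2 q1 q2 z = 0 := by
    have expand : det2 q1 q2 z = (1 - σ) * e1 + σ * e2 := by
      simp [det2, hz, he1, he2]; ring
    rw [expand, hσdef]; field_simp; ring
  have hq12 : q1 ≠ q2 := by
    intro h; rw [he1, he2, h] at hdp; unfold det2 at hdp; nlinarith [hdp]
  obtain ⟨τ, hτ0, hτ1⟩ := collinear_param hq12 hz1
  have hdet : det2 p1 p2 z = 0 := by simp [det2, hz]; ring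
  have hexp : det2 p1 p2 z = (1 - τ) * det2 p1 p2 q1 + τ * det2 p1 p2 q2 := by
    unfold det2; rw [hτ0, hτ1]; ring
  have hτrange : 0 < τ ∧ τ < 1 := by
    rw [hdet] at hexp
    constructor <;> nlinarith [hexp]
  have ways : (1 - σ) * (b0 + b1 * p1 0 + b2 * p1 1) + σ * (b0 + b1 * p2 0 + b2 * p2 1)
      = (1 - τ) * (b0 + b1 * q1 0 + b2 * q1 1) + τ * (b0 + b1 * q2 0 + b2 * q2 1) := by
    have l : b0 + b1 * z 0 + b2 * z 1 = (1 - σ) * (b0 + b1 * p1 0 + b2 * p1 1) + σ * (b0 + b1 * p2 0 + b2 * p2 1) := by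
      simp [hz]; ring
    have r : b0 + b1 * z 0 + b2 * z 1 = (1 - τ) * (b0 + b1 * q1 0 + b2 * q1 1) + τ * (b0 + b1 * q2 0 + b2 * q2 1) := by
      simp [hz] at hτ0 hτ1 ⊢
      rw [hτ0, hτ1]; ring
    rw [← l, ← r]
  nlinarith [ways, hσ01.1, hσ01.2, hτrange.1, hτrange.2, hp1, hp2, hq1, hq2]
-- chunk 3 : cyclic gaps, nxt, GoodS, chord lemma
lemma det2_abb (a b : Pt) : det2 a b b = 0 := by unfold det2; ring
lemma det2_aba (a b : Pt) : det2 a b a = 0 := by unfold det2; ring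

section gaps
variable {n : ℕ} [NeZero n]

def gap (u v : ZMod n) : ℕ := (v - u).val

lemma gap_lt (u v : ZMod n) : gap u v < n := ZMod.val_lt _

lemma add_gap (u v : ZMod n) : u + ((gap u v : ℕ) : ZMod n) = v := by
  have h : ((gap u v : ℕ) : ZMod n) = v - u := ZMod.natCast_rightInverse (v - u)
  rw [h]; ring

lemma gap_eq_zero_iff {u v : ZMod n} : gap u v = 0 ↔ v = u := by
  rw [gap, ZMod.val_eq_zero, sub_eq_zero]

lemma gap_inj {u v w : ZMod n} (h : gap u v = gap u w) : v = w := by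
  have h1 := add_gap u v
  have h2 := add_gap u w
  rw [h] at h1; exact h1.symm.trans h2

lemma gap_cast {u : ZMod n} {i : ℕ} (hi : i < n) : gap u (u + (i : ZMod n)) = i := by
  have h : (u + (i : ZMod n)) - u = (i : ZMod n) := by ring
  rw [gap, h, ZMod.val_cast_of_lt hi]

lemma gap_add_gap {u v : ZMod n} (huv : u ≠ v) : gap u v + gap v u = n := by
  have h1 : v - u ≠ 0 := sub_ne_zero.2 (Ne.symm huv)
  have h3 : u - v = -(v - u) := by ring
  rw [gap, gap, h3, ZMod.neg_val, if_neg h1]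
  have h4 := ZMod.val_lt (v - u)
  have h2 : (v - u).val ≠ 0 := by rwa [Ne, ZMod.val_eq_zero]
  omega

lemma gap_sub {u w x : ZMod n} (h : gap u w ≤ gap u x) :
    gap w x = gap u x - gap u w := by
  have hx := add_gap u x
  have hw := add_gap u w
  have hcast : x - w = ((gap u x - gap u w : ℕ) : ZMod n) := by
    rw [Nat.cast_sub h]
    have e1 : ((gap u x : ℕ) : ZMod n) = x - u := ZMod.natCast_rightInverse (x - u)
    have e2 : ((gap u w : ℕ) : ZMod n) = w - u := ZMod.natCast_rightInverse (w - u)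
    rw [e1, e2]; ring
  have hlt : gap u x - gap u w < n := by have := gap_lt u x; omega
  rw [gap, hcast, ZMod.val_cast_of_lt hlt]

/-- next element of `S` after `u` in cyclic order -/
def nxt (S : Finset (ZMod n)) (u : ZMod n) : ZMod n :=
  if h : ((S.erase u).image (gap u)).Nonempty
  then u + ((((S.erase u).image (gap u)).min' h : ℕ) : ZMod n) else u

lemma nxt_spec_unique {S : Finset (ZMod n)} {u v : ZMod n} (hv : v ∈ S.erase u)
    (hmin : ∀ x ∈ S.erase u, gap u v ≤ gap u x) : nxt S u = v := by
  have himg : ((S.erase u).image (gap u)).Nonempty := ⟨gap u v, Finset.mem_image_of_mem _ hv⟩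
  have hle : ((S.erase u).image (gap u)).min' himg = gap u v := by
    apply le_antisymm
    · exact Finset.min'_le _ _ (Finset.mem_image_of_mem _ hv)
    · apply Finset.le_min'
      rintro y hy
      obtain ⟨x, hx, rfl⟩ := Finset.mem_image.1 hy
      exact hmin x hx
  rw [nxt, dif_pos himg, hle, add_gap]

lemma nxt_mem {S : Finset (ZMod n)} {u : ZMod n} (hS : (S.erase u).Nonempty) :
    nxt S u ∈ S.erase u := by
  have himg : ((S.erase u).image (gap u)).Nonempty := hS.image _
  have hm := Finset.min'_mem _ himg
  obtain ⟨x, hx, hgx⟩ := Finset.mem_image.1 hm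
  rw [nxt, dif_pos himg, ← hgx, add_gap]; exact hx

lemma nxt_min {S : Finset (ZMod n)} {u : ZMod n} (hS : (S.erase u).Nonempty)
    {x : ZMod n} (hx : x ∈ S.erase u) : gap u (nxt S u) ≤ gap u x := by
  have himg : ((S.erase u).image (gap u)).Nonempty := hS.image _
  have hlt : (((S.erase u).image (gap u)).min' himg) < n := by
    have hm := Finset.min'_mem _ himg
    obtain ⟨y, _, hgy⟩ := Finset.mem_image.1 hm
    rw [← hgy]; exact gap_lt u y
  rw [nxt, dif_pos himg, gap_cast hlt]
  exact Finset.min'_le _ _ (Finset.mem_image_of_mem _ hx)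

end gaps

section goods
variable {n : ℕ} [NeZero n] {V : ZMod n → Pt}

def GoodS (V : ZMod n → Pt) (S : Finset (ZMod n)) : Prop :=
  ∀ u ∈ S, ∀ x ∈ S, x ≠ u → x ≠ nxt S u → 0 < det2 (V u) (V (nxt S u)) (V x)

lemma good_univ (hn : 2 ≤ n) (hconv : ConvexCCW V) : GoodS V Finset.univ := by
  intro u _ x hx hxu hxn
  have h1n : (1 : ℕ) < n := hn
  haveI : Fact (1 < n) := ⟨h1n⟩
  have g1 : gap u (u + 1) = 1 := by
    have e : u + 1 - u = 1 := by ring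
    rw [gap, e, ZMod.val_one]
  have hne : u + (1 : ZMod n) ≠ u := by
    intro h
    have : gap u (u + 1) = 0 := by rw [gap_eq_zero_iff]; exact h
    omega
  have hnxt : nxt Finset.univ u = u + 1 := by
    apply nxt_spec_unique
    · simp [Finset.mem_erase, hne]
    · intro y hy
      rw [g1]
      have : gap u y ≠ 0 := by
        rw [Ne, gap_eq_zero_iff]; exact (Finset.mem_erase.1 hy).1
      omega
  rw [hnxt]
  exact hconv.2 u x hxu (by rwa [hnxt] at hxn)

lemma good_erase {S : Finset (ZMod n)}
    (hG : GoodS V S) {w : ZMod n} (hw : w ∈ S) (hcard : 3 ≤ (S.erase w).card) :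
    GoodS V (S.erase w) := by
  intro u hu x hx hxu hxn
  have huS : u ∈ S := Finset.mem_of_mem_erase hu
  have huw : u ≠ w := (Finset.mem_erase.1 hu).1
  have hxS : x ∈ S := Finset.mem_of_mem_erase hx
  have hxw : x ≠ w := (Finset.mem_erase.1 hx).1
  have hSune : (S.erase u).Nonempty := ⟨w, Finset.mem_erase.2 ⟨(Ne.symm huw), hw⟩⟩
  by_cases hzw : nxt S u = w
  case neg =>
    -- next unchanged
    have hnxt : nxt (S.erase w) u = nxt S u := by
      apply nxt_spec_unique
      · have := nxt_mem hSune
        rw [Finset.mem_erase] at this ⊢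
        exact ⟨this.1, Finset.mem_erase.2 ⟨hzw, this.2⟩⟩
      · intro y hy
        rw [Finset.mem_erase, Finset.mem_erase] at hy
        exact nxt_min hSune (Finset.mem_erase.2 ⟨hy.1, hy.2.2⟩)
    rw [hnxt]
    exact hG u huS x hxS hxu (by rwa [hnxt] at hxn)
  case pos =>
    have hSwne : (S.erase w).Nonempty := Finset.card_pos.1 (by omega)
    set z := nxt S w with hz
    have hzmem := nxt_mem hSwne
    have hzS : z ∈ S := Finset.mem_of_mem_erase hzmem
    have hzw2 : z ≠ w := (Finset.mem_erase.1 hzmem).1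
    have hgap_uw_min : ∀ y ∈ S, y ≠ u → gap u w ≤ gap u y := by
      intro y hy hyu
      have := nxt_min hSune (Finset.mem_erase.2 ⟨hyu, hy⟩)
      rwa [hzw] at this
    have hgt : ∀ y ∈ S, y ≠ u → y ≠ w → gap u w < gap u y := by
      intro y hy hyu hyw
      rcases lt_or_eq_of_le (hgap_uw_min y hy hyu) with h | h
      · exact h
      · exact absurd (gap_inj h).symm hyw
    have hzu : z ≠ u := by
      intro hzu
      -- find a third element
      obtain ⟨x0, hx0, hx0u⟩ : ∃ x0 ∈ S.erase w, x0 ≠ u := by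
        by_contra hcon
        push_neg at hcon
        have : S.erase w ⊆ {u} := fun y hy => Finset.mem_singleton.2 (hcon y hy)
        have := Finset.card_le_card this
        simp at this; omega
      have hx0S : x0 ∈ S := Finset.mem_of_mem_erase hx0
      have hx0w : x0 ≠ w := (Finset.mem_erase.1 hx0).1
      have h1 : gap u w < gap u x0 := hgt x0 hx0S hx0u hx0w
      have h2 : gap w x0 = gap u x0 - gap u w := gap_sub h1.le
      have h3 : gap w z ≤ gap w x0 := nxt_min hSwne (Finset.mem_erase.2 ⟨hx0w, hx0S⟩)
      have h4 : gap w u = n - gap u w := by have := gap_add_gap huw; omega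
      rw [hzu] at h3
      have h5 := gap_lt u x0
      have h6 := gap_lt u w
      omega
    have hznxt : nxt (S.erase w) u = z := by
      apply nxt_spec_unique
      · rw [Finset.mem_erase, Finset.mem_erase]
        exact ⟨hzu, hzw2, hzS⟩
      · intro y hy
        rw [Finset.mem_erase, Finset.mem_erase] at hy
        obtain ⟨hyu, hyw, hyS⟩ := hy
        have hy1 : gap u w < gap u y := hgt y hyS hyu hyw
        have hz1 : gap u w < gap u z := hgt z hzS hzu hzw2
        have e1 : gap w y = gap u y - gap u w := gap_sub hy1.le
        have e2 : gap w z = gap u z - gap u w := gap_sub hz1.le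
        have h3 : gap w z ≤ gap w y := nxt_min hSwne (Finset.mem_erase.2 ⟨hyw, hyS⟩)
        omega
    rw [hznxt]
    -- key4 argument
    have hxz : x ≠ z := by rwa [hznxt] at hxn
    have hpqr : 0 < det2 (V u) (V w) (V z) := by
      have := hG u huS z hzS hzu (by rw [hzw]; exact hzw2)
      rwa [hzw] at this
    have hpqx : 0 < det2 (V u) (V w) (V x) := by
      have := hG u huS x hxS hxu (by rw [hzw]; exact hxw)
      rwa [hzw] at this
    have hqrx : 0 < det2 (V w) (V z) (V x) := by
      exact hG w hw x hxS hxw (by rw [← hz]; exact hxz)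
    by_contra hcon
    push_neg at hcon
    -- x is in the closed triangle u w z ; use the edge at x
    have hSxne : (S.erase x).Nonempty := ⟨u, Finset.mem_erase.2 ⟨Ne.symm hxu, huS⟩⟩
    set N := nxt S x with hN
    have hNmem := nxt_mem hSxne
    have hNx : N ≠ x := (Finset.mem_erase.1 hNmem).1
    have hterm : ∀ y, y ∈ S → y ≠ x → 0 ≤ det2 (V x) (V N) (V y) := by
      intro y hyS hyx
      rcases eq_or_ne y N with rfl | hyN
      · rw [det2_abb]
      · exact (hG x hxS y hyS hyx hyN).le
    have htermS : ∀ y, y ∈ S → y ≠ x → y ≠ N → 0 < det2 (V x) (V N) (V y) := by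
      intro y hyS hyx hyN
      exact hG x hxS y hyS hyx hyN
    have hxu' : u ≠ x := Ne.symm hxu
    have hxw' : w ≠ x := Ne.symm hxw
    have hxz' : z ≠ x := Ne.symm hxz
    have key := key4_ident (V u) (V w) (V z) (V x) (V N)
    -- a = det2 x w z > 0 (cyclic of qrx), b = det2 u x z ≥ 0, c = det2 u w x > 0
    have ha : 0 < det2 (V x) (V w) (V z) := by
      rw [det2_cyc]; exact hqrx
    have hb : 0 ≤ det2 (V u) (V x) (V z) := by
      rw [det2_swap]; linarith
    have htp : 0 ≤ det2 (V x) (V N) (V u) := hterm u huS hxu'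
    have htq : 0 ≤ det2 (V x) (V N) (V w) := hterm w hw hxw'
    have htr : 0 ≤ det2 (V x) (V N) (V z) := hterm z hzS hxz'
    by_cases huN : u = N
    · have hzN : z ≠ N := fun hzN => hzu (hzN.trans huN.symm)
      have h1 := htermS z hzS hxz' hzN
      have htp0 : det2 (V x) (V N) (V u) = 0 := by rw [huN, det2_abb]
      have e2 : det2 (V x) (V w) (V z) * det2 (V x) (V N) (V u) = 0 := by rw [htp0]; ring
      have e3 : 0 ≤ det2 (V u) (V x) (V z) * det2 (V x) (V N) (V w) := mul_nonneg hb htq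
      have e4 : 0 < det2 (V u) (V w) (V x) * det2 (V x) (V N) (V z) := mul_pos hpqx h1
      linarith
    · have h1 := htermS u huS hxu' (fun h => huN h)
      have e2 : 0 < det2 (V x) (V w) (V z) * det2 (V x) (V N) (V u) := mul_pos ha h1
      have e3 : 0 ≤ det2 (V u) (V x) (V z) * det2 (V x) (V N) (V w) := mul_nonneg hb htq
      have e4 : 0 ≤ det2 (V u) (V w) (V x) * det2 (V x) (V N) (V z) := mul_nonneg hpqx.le htr
      linarith

lemma good_subset : ∀ (S : Finset (ZMod n)), GoodS V S →
    ∀ T ⊆ S, T.card = 3 → GoodS V T := by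
  intro S
  induction S using Finset.strongInduction with
  | _ S ih =>
    intro hG T hTS hT3
    rcases eq_or_lt_of_le (Finset.card_le_card hTS) with h | h
    · have : T = S := Finset.eq_of_subset_of_card_le hTS (by omega)
      rwa [this]
    · obtain ⟨w, hwS, hwT⟩ : ∃ w ∈ S, w ∉ T := by
        by_contra hcon
        push_neg at hcon
        have : S ⊆ T := fun y hy => hcon y hy
        have := Finset.card_le_card this
        omega
      have hsub : T ⊆ S.erase w := fun y hy =>
        Finset.mem_erase.2 ⟨fun h' => hwT (h' ▸ hy), hTS hy⟩
      have hcard : 3 ≤ (S.erase w).card := by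
        have := Finset.card_le_card hsub; omega
      exact ih (S.erase w) (Finset.erase_ssubset hwS) (good_erase hG hwS hcard) T hsub hT3
end goods
-- chunk 4 : chord lemma for the polygon, arcs, pencil comparisons
section poly
variable {n : ℕ} [NeZero n] {V : ZMod n → Pt}

lemma off_ne0 {a : ZMod n} {i : ℕ} (h0 : 0 < i) (hi : i < n) : a + (i : ZMod n) ≠ a := by
  intro h
  have h1 := gap_cast (u := a) hi
  rw [h] at h1
  rw [gap, sub_self, ZMod.val_zero] at h1
  omega

lemma off_ne {a : ZMod n} {i j : ℕ} (hi : i < n) (hj : j < n) (hij : i ≠ j) :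
    a + (i : ZMod n) ≠ a + (j : ZMod n) := by
  intro h
  have h1 : gap a (a + (i : ZMod n)) = gap a (a + (j : ZMod n)) := by rw [h]
  rw [gap_cast hi, gap_cast hj] at h1
  exact hij h1

lemma chord_pos (hn : 4 ≤ n) (hconv : ConvexCCW V) {a : ZMod n} {i j : ℕ}
    (h0 : 0 < i) (hij : i < j) (hj : j < n) :
    0 < det2 (V a) (V (a + (i : ZMod n))) (V (a + (j : ZMod n))) := by
  set b := a + (i : ZMod n) with hb
  set c := a + (j : ZMod n) with hc
  have hab : b ≠ a := off_ne0 h0 (by omega)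
  have hac : c ≠ a := off_ne0 (by omega) hj
  have hbc : b ≠ c := off_ne (by omega) hj (by omega)
  have hT3 : ({a, b, c} : Finset (ZMod n)).card = 3 := by
    rw [Finset.card_insert_of_notMem (by simp [hab.symm, hac.symm]),
        Finset.card_insert_of_notMem (by simp [hbc]), Finset.card_singleton]
  have hG : GoodS V {a, b, c} :=
    good_subset Finset.univ (good_univ (by omega) hconv) _ (Finset.subset_univ _) hT3
  have hnxt : nxt ({a, b, c} : Finset (ZMod n)) a = b := by
    apply nxt_spec_unique
    · rw [Finset.mem_erase]; exact ⟨hab, by simp⟩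
    · intro y hy
      rw [Finset.mem_erase, Finset.mem_insert, Finset.mem_insert, Finset.mem_singleton] at hy
      rcases hy.2 with rfl | rfl | rfl
      · exact absurd rfl hy.1
      · rw [hb, gap_cast (by omega)]
      · rw [hb, hc, gap_cast (by omega), gap_cast hj]; omega
  have := hG a (by simp) c (by simp) hac (by rw [hnxt]; exact hbc.symm)
  rwa [hnxt] at this

/-- rebasing equalities -/
lemma reb1 {a : ZMod n} {o g : ℕ} (h : o ≤ g) :
    a + (g : ZMod n) = (a + (o : ZMod n)) + ((g - o : ℕ) : ZMod n) := by
  rw [Nat.cast_sub h]; ring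

lemma reb2 {a : ZMod n} {o : ℕ} (h : o ≤ n) :
    a = (a + (o : ZMod n)) + ((n - o : ℕ) : ZMod n) := by
  rw [Nat.cast_sub h]
  have : ((n : ℕ) : ZMod n) = 0 := ZMod.natCast_self n
  rw [this]; ring

end poly

section pencilt
variable (A B : Pt)

def tpar (x : Pt) : ℝ := pq A B x / (2 * det2 A B x)

lemma pow_t_neg {x : Pt} (hD : det2 A B x < 0) (s : ℝ) :
    0 ≤ pq A B x - s * (2 * det2 A B x) ↔ tpar A B x ≤ s := by
  rw [tpar, div_le_iff_of_neg (by linarith)]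
  constructor <;> intro h <;> nlinarith [h]

lemma pow_t_pos {x : Pt} (hD : 0 < det2 A B x) (s : ℝ) :
    0 ≤ pq A B x - s * (2 * det2 A B x) ↔ s ≤ tpar A B x := by
  rw [tpar, le_div_iff₀ (by linarith)]
  constructor <;> intro h <;> nlinarith [h]

lemma pow_t_neg_lt {x : Pt} (hD : det2 A B x < 0) (s : ℝ) :
    pq A B x - s * (2 * det2 A B x) < 0 ↔ s < tpar A B x := by
  rw [← not_le, ← not_le, pow_t_neg A B hD]

lemma pow_t_pos_lt {x : Pt} (hD : 0 < det2 A B x) (s : ℝ) :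
    pq A B x - s * (2 * det2 A B x) < 0 ↔ tpar A B x < s := by
  rw [← not_le, ← not_le, pow_t_pos A B hD]

lemma pow_t_self {x : Pt} (hD : det2 A B x ≠ 0) :
    pq A B x - tpar A B x * (2 * det2 A B x) = 0 := by
  rw [tpar]; field_simp; ring

end pencilt

section arcs
variable {n : ℕ} [NeZero n]

def Arc (a : ZMod n) (L : ℕ) : Finset (ZMod n) :=
  (Finset.range L).image (fun k : ℕ => a + (k : ZMod n))

lemma mem_arc_iff {a : ZMod n} {L : ℕ} (hL : L ≤ n) {x : ZMod n} :
    x ∈ Arc a L ↔ gap a x < L := by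
  rw [Arc, Finset.mem_image]
  constructor
  · rintro ⟨k, hk, rfl⟩
    rw [Finset.mem_range] at hk
    rw [gap_cast (by omega)]
    exact hk
  · intro h
    exact ⟨gap a x, Finset.mem_range.2 h, add_gap a x⟩

lemma arc_univ {a : ZMod n} : Arc a n = Finset.univ := by
  ext x
  simp only [Finset.mem_univ, iff_true]
  exact (mem_arc_iff le_rfl).2 (gap_lt a x)

variable (V : ZMod n → Pt)

def AE (A T : Finset (ZMod n)) : Prop :=
  ∃ (O : Pt) (R : ℝ), (∀ v ∈ T, dist (V v) O = R) ∧ ∀ x ∈ A, R ≤ dist (V x) O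

def AF (A T : Finset (ZMod n)) : Prop :=
  ∃ (O : Pt) (R : ℝ), (∀ v ∈ T, dist (V v) O = R) ∧ ∀ x ∈ A, x ∉ T → dist (V x) O < R

def DE (A : Finset (ZMod n)) : Finset (Finset (ZMod n)) :=
  Finset.univ.filter (fun T => T ⊆ A ∧ T.card = 3 ∧ AE V A T)

def DF (A : Finset (ZMod n)) : Finset (Finset (ZMod n)) :=
  Finset.univ.filter (fun T => T ⊆ A ∧ T.card = 3 ∧ AF V A T)

lemma emptyCircle_of_arc {T : Finset (ZMod n)} (h : EmptyCircle V T) (A : Finset (ZMod n)) :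
    AE V A T := by
  obtain ⟨O, R, h1, h2⟩ := h
  exact ⟨O, R, h1, fun x _ => h2 x⟩

lemma fullCircle_of_arc {T : Finset (ZMod n)} (h : FullCircle V T) (A : Finset (ZMod n)) :
    AF V A T := by
  obtain ⟨O, R, h1, h2⟩ := h
  exact ⟨O, R, h1, fun x _ hx => h2 x hx⟩

end arcs

-- genericity bridge
lemma no_four_conc {n : ℕ} [NeZero n] {V : ZMod n → Pt} (hgen : GenericPoly V)
    {i j k l : ZMod n} (hij : i ≠ j) (hik : i ≠ k) (hil : i ≠ l) (hjk : j ≠ k)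
    (hjl : j ≠ l) (hkl : k ≠ l) {O : Pt}
    (h1 : d2 (V i) O = d2 (V j) O) (h2 : d2 (V i) O = d2 (V k) O)
    (h3 : d2 (V i) O = d2 (V l) O) : False := by
  refine hgen.2 i j k l hij hik hil hjk hjl hkl ⟨O, dist (V i) O, rfl, ?_, ?_, ?_⟩ <;>
    rw [dist_eq_iff] <;> [exact h1.symm; exact h2.symm; exact h3.symm]

-- affine difference of two powers
lemma diff_affine (O O' : Pt) (c c' : ℝ) :
    ∃ b0 b1 b2 : ℝ, ∀ x : Pt,
      (d2 x O - c) - (d2 x O' - c') = b0 + b1 * x 0 + b2 * x 1 := by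
  refine ⟨(O 0)^2 + (O 1)^2 - c - (O' 0)^2 - (O' 1)^2 + c',
    2 * (O' 0 - O 0), 2 * (O' 1 - O 1), fun x => by unfold d2; ring⟩
-- chunk 5 : helpers + main induction (empty circles)
section maine
variable {n : ℕ} [NeZero n] {V : ZMod n → Pt}

lemma trip_card {p z q : ZMod n} (hzp : z ≠ p) (hzq : z ≠ q) (hpq : p ≠ q) :
    ({p, z, q} : Finset (ZMod n)).card = 3 := by
  rw [Finset.card_insert_of_notMem (by simp [hzp.symm, hpq]),
      Finset.card_insert_of_notMem (by simp [hzq]), Finset.card_singleton]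

lemma AE_mono {A A' T : Finset (ZMod n)} (h : A' ⊆ A) (hA : AE V A T) : AE V A' T := by
  obtain ⟨O, R, h1, h2⟩ := hA
  exact ⟨O, R, h1, fun x hx => h2 x (h hx)⟩

lemma AF_mono {A A' T : Finset (ZMod n)} (h : A' ⊆ A) (hA : AF V A T) : AF V A' T := by
  obtain ⟨O, R, h1, h2⟩ := hA
  exact ⟨O, R, h1, fun x hx hxT => h2 x (h hx) hxT⟩

lemma three_elt {T : Finset (ZMod n)} (h3 : T.card = 3) {p q : ZMod n}
    (hp : p ∈ T) (hq : q ∈ T) (hpq : p ≠ q) :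
    ∃ z, z ≠ p ∧ z ≠ q ∧ T = {p, z, q} := by
  have hq' : q ∈ T.erase p := Finset.mem_erase.2 ⟨hpq.symm, hq⟩
  have hcard : ((T.erase p).erase q).card = 1 := by
    rw [Finset.card_erase_of_mem hq', Finset.card_erase_of_mem hp, h3]
  obtain ⟨z, hz⟩ := Finset.card_eq_one.1 hcard
  have hzmem : z ∈ (T.erase p).erase q := by rw [hz]; simp
  have hzq : z ≠ q := (Finset.mem_erase.1 hzmem).1
  have hzp : z ≠ p := (Finset.mem_erase.1 (Finset.mem_of_mem_erase hzmem)).1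
  have hzT : z ∈ T := Finset.mem_of_mem_erase (Finset.mem_of_mem_erase hzmem)
  refine ⟨z, hzp, hzq, (Finset.eq_of_subset_of_card_le ?_ ?_).symm⟩
  · intro w hw
    rw [Finset.mem_insert, Finset.mem_insert, Finset.mem_singleton] at hw
    rcases hw with rfl | rfl | rfl
    · exact hp
    · exact hzT
    · exact hq
  · rw [h3, trip_card hzp hzq hpq]

lemma gap_self (a : ZMod n) : gap a a = 0 := by rw [gap, sub_self, ZMod.val_zero]

/-- main induction, empty-circle version -/
lemma mainE (hn : 4 ≤ n) (hconv : ConvexCCW V) (hgen : GenericPoly V) :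
    ∀ L : ℕ, 2 ≤ L → L ≤ n → ∀ (a : ZMod n) (Ow : Pt),
    d2 (V a) Ow = d2 (V (a + ((L - 1 : ℕ) : ZMod n))) Ow →
    (∀ x : ZMod n, d2 (V a) Ow ≤ d2 (V x) Ow) →
    (DE V (Arc a L)).card = L - 2 ∧ ∀ T ∈ DE V (Arc a L), EmptyCircle V T := by
  intro L
  induction L using Nat.strong_induction_on with
  | _ L ih =>
  intro hL2 hLn a Ow hOweq hOwmin
  by_cases hL2' : L ≤ 2
  · have hL : L = 2 := by omega
    subst hL
    have hDE : DE V (Arc a 2) = ∅ := by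
      apply Finset.eq_empty_of_forall_notMem
      intro T hT
      rw [DE, Finset.mem_filter] at hT
      have hc := Finset.card_le_card hT.2.1
      have : (Arc a 2).card ≤ 2 := le_trans (Finset.card_image_le) (by simp)
      omega
    rw [hDE]
    exact ⟨rfl, fun T hT => absurd hT (by rw [hDE] at *; simp)⟩
  push_neg at hL2'
  have hL3 : 3 ≤ L := hL2'
  set c := a + ((L - 1 : ℕ) : ZMod n) with hc
  have hLm1 : L - 1 < n := by omega
  have hca : c ≠ a := off_ne0 (by omega) hLm1
  have hVca : V a ≠ V c := fun h => hca (hconv.1 h).symm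
  have hxrep : ∀ x : ZMod n, x = a + ((gap a x : ℕ) : ZMod n) := fun x => (add_gap a x).symm
  -- side signs
  have hside_int : ∀ x : ZMod n, 0 < gap a x → gap a x < L - 1 → det2 (V a) (V c) (V x) < 0 := by
    intro x h1 h2
    have h3 := chord_pos hn hconv (a := a) (i := gap a x) (j := L - 1) h1 h2 hLm1
    rw [← hxrep x, ← hc] at h3
    have h4 := det2_swap (V a) (V c) (V x)
    linarith
  have hside_ext : ∀ x : ZMod n, L - 1 < gap a x → 0 < det2 (V a) (V c) (V x) := by
    intro x h1
    have h3 := chord_pos hn hconv (a := a) (i := L - 1) (j := gap a x) (by omega) h1 (gap_lt a x)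
    rw [← hxrep x, ← hc] at h3
    exact h3
  -- pow helper
  have hpow : ∀ (s : ℝ) (x : ZMod n),
      d2 (V x) (pc (V a) (V c) s) - d2 (V a) (pc (V a) (V c) s)
        = pq (V a) (V c) (V x) - s * (2 * det2 (V a) (V c) (V x)) :=
    fun s x => pow_pc (V a) (V c) s (V x)
  -- witness parameter
  obtain ⟨sw, hsw⟩ := exists_param (V a) (V c) hVca hOweq
  have hwit_pow : ∀ x : ZMod n,
      0 ≤ pq (V a) (V c) (V x) - sw * (2 * det2 (V a) (V c) (V x)) := by
    intro x
    have h1 := hOwmin x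
    rw [hsw] at h1
    have h2 := hpow sw x
    linarith
  -- interior argmax
  have hitr_ne : (Finset.Icc 1 (L - 2)).Nonempty := ⟨1, by simp; omega⟩
  obtain ⟨km, hkm_mem, hkm_max⟩ := Finset.exists_max_image (Finset.Icc 1 (L - 2))
    (fun k => tpar (V a) (V c) (V (a + (k : ZMod n)))) hitr_ne
  rw [Finset.mem_Icc] at hkm_mem
  set b := a + ((km : ℕ) : ZMod n) with hbdef
  have hgab : gap a b = km := gap_cast (by omega)
  set s1 := tpar (V a) (V c) (V b) with hs1
  set O1 := pc (V a) (V c) s1 with hO1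
  have hdb : det2 (V a) (V c) (V b) < 0 := hside_int b (by omega) (by omega)
  have hO1b : d2 (V b) O1 = d2 (V a) O1 := by
    have h1 := hpow s1 b
    have h2 := pow_t_self (V a) (V c) (x := V b) (ne_of_lt hdb)
    rw [hO1]; rw [← hs1] at h2; linarith
  have hO1c : d2 (V c) O1 = d2 (V a) O1 := (pc_equidist (V a) (V c) s1).symm
  -- s1 ≤ sw
  have hs1w : s1 ≤ sw := (pow_t_neg (V a) (V c) hdb sw).1 (hwit_pow b)
  -- O1 gives an empty circle
  have hO1min : ∀ x : ZMod n, d2 (V a) O1 ≤ d2 (V x) O1 := by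
    intro x
    have hgx := gap_lt a x
    have hx := hpow s1 x
    rcases Nat.lt_or_ge (gap a x) L with hin | hout
    · rcases Nat.eq_zero_or_pos (gap a x) with h0 | h1
      · have hxa : x = a := by rw [hxrep x, h0]; simp
        rw [hxa]
      · rcases eq_or_lt_of_le (show gap a x ≤ L - 1 by omega) with hLm | hint
        · have hxc : x = c := by rw [hxrep x, hLm, ← hc]
          rw [hxc]; linarith [hO1c]
        · have hd := hside_int x h1 hint
          have hmax := hkm_max (gap a x) (Finset.mem_Icc.2 ⟨by omega, by omega⟩)
          rw [← hxrep x] at hmax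
          have : 0 ≤ pq (V a) (V c) (V x) - s1 * (2 * det2 (V a) (V c) (V x)) :=
            (pow_t_neg (V a) (V c) hd s1).2 hmax
          rw [hO1]; linarith
    · have hd := hside_ext x (by omega)
      have h2 : sw ≤ tpar (V a) (V c) (V x) := (pow_t_pos (V a) (V c) hd sw).1 (hwit_pow x)
      have : 0 ≤ pq (V a) (V c) (V x) - s1 * (2 * det2 (V a) (V c) (V x)) :=
        (pow_t_pos (V a) (V c) hd s1).2 (by linarith)
      rw [hO1]; linarith
  -- the middle triangle
  have hba : b ≠ a := off_ne0 (by omega) (by omega)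
  have hbc : b ≠ c := off_ne (by omega) hLm1 (by omega)
  set T1 : Finset (ZMod n) := {a, b, c} with hT1def
  have hT1card : T1.card = 3 := trip_card hba hbc hca.symm
  have hT1sub : T1 ⊆ Arc a L := by
    intro x hx
    rw [hT1def, Finset.mem_insert, Finset.mem_insert, Finset.mem_singleton] at hx
    rw [mem_arc_iff hLn]
    rcases hx with rfl | rfl | rfl
    · rw [gap_self]; omega
    · rw [hgab]; omega
    · rw [gap_cast hLm1]; omega
  have hT1E : EmptyCircle V T1 := by
    refine ⟨O1, dist (V a) O1, ?_, fun j => dist_le_iff.2 (hO1min j)⟩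
    intro v hv
    rw [hT1def, Finset.mem_insert, Finset.mem_insert, Finset.mem_singleton] at hv
    rcases hv with rfl | rfl | rfl
    · rfl
    · exact dist_eq_iff.2 hO1b
    · exact dist_eq_iff.2 hO1c
  have hT1mem : T1 ∈ DE V (Arc a L) := by
    rw [DE, Finset.mem_filter]
    exact ⟨Finset.mem_univ _, hT1sub, hT1card, emptyCircle_of_arc V hT1E _⟩
  -- sub-arc data
  have e_bc : b + ((L - km - 1 : ℕ) : ZMod n) = c := by
    rw [hbdef, hc]
    have h1 : ((L - km - 1 : ℕ) : ZMod n) = ((L - 1 : ℕ) : ZMod n) - ((km : ℕ) : ZMod n) := by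
      rw [show L - km - 1 = (L-1) - km by omega, Nat.cast_sub (by omega)]
    rw [h1]; ring
  have IH1 := ih (km + 1) (by omega) (by omega) (by omega) a O1
    (by simp only [Nat.add_sub_cancel]; rw [← hbdef]; exact hO1b.symm) hO1min
  have IH2 := ih (L - km) (by omega) (by omega) (by omega) b O1
    (by rw [show L - km - 1 = L - km - 1 from rfl, e_bc, hO1b, hO1c])
    (fun x => by rw [hO1b]; exact hO1min x)
  obtain ⟨hcard1, hglob1⟩ := IH1
  obtain ⟨hcard2, hglob2⟩ := IH2
  have hsub1 : Arc a (km + 1) ⊆ Arc a L := by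
    intro x hx
    rw [mem_arc_iff (by omega)] at hx
    rw [mem_arc_iff hLn]; omega
  have hgap2 : ∀ x : ZMod n, x ∈ Arc b (L - km) → gap a x = km + gap b x := by
    intro x hx
    rw [mem_arc_iff (by omega)] at hx
    have h1 : a + ((km + gap b x : ℕ) : ZMod n) = x := by
      rw [Nat.cast_add, ← add_assoc, ← hbdef]
      exact add_gap b x
    calc gap a x = gap a (a + ((km + gap b x : ℕ) : ZMod n)) := by rw [h1]
      _ = km + gap b x := gap_cast (by omega)
  have hsub2 : Arc b (L - km) ⊆ Arc a L := by
    intro x hx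
    have h1 := hgap2 x hx
    rw [mem_arc_iff (by omega)] at hx
    rw [mem_arc_iff hLn]; omega
  have hE1sub : DE V (Arc a (km + 1)) ⊆ DE V (Arc a L) := by
    intro T hT
    rw [DE, Finset.mem_filter] at hT ⊢
    exact ⟨Finset.mem_univ _, hT.2.1.trans hsub1, hT.2.2.1,
      emptyCircle_of_arc V (hglob1 T (by rw [DE, Finset.mem_filter]; exact hT)) _⟩
  have hE2sub : DE V (Arc b (L - km)) ⊆ DE V (Arc a L) := by
    intro T hT
    rw [DE, Finset.mem_filter] at hT ⊢
    exact ⟨Finset.mem_univ _, hT.2.1.trans hsub2, hT.2.2.1,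
      emptyCircle_of_arc V (hglob2 T (by rw [DE, Finset.mem_filter]; exact hT)) _⟩
  -- coverage
  have hcov : ∀ T ∈ DE V (Arc a L), T ∉ DE V (Arc a (km + 1)) → T ∉ DE V (Arc b (L - km)) → T = T1 := by
    intro T hT hn1 hn2
    rw [DE, Finset.mem_filter] at hT
    obtain ⟨-, hTsub, hT3, hTAE⟩ := hT
    have hgac : gap a c = L - 1 := by rw [hc]; exact gap_cast hLm1
    have hne_gap : ∀ z w : ZMod n, gap a z ≠ gap a w → z ≠ w := by
      intro z w h hzw; exact h (by rw [hzw])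
    have reb3 : ∀ (o g : ℕ), o ≤ n → (a + (o : ZMod n)) + ((n - o + g : ℕ) : ZMod n) = a + (g : ZMod n) := by
      intro o g ho
      push_cast [Nat.cast_sub ho]
      rw [ZMod.natCast_self]; ring
    have hnsub1 : ¬ T ⊆ Arc a (km + 1) := by
      intro hsub
      apply hn1
      rw [DE, Finset.mem_filter]
      exact ⟨Finset.mem_univ _, hsub, hT3, AE_mono hsub1 hTAE⟩
    have hnsub2 : ¬ T ⊆ Arc b (L - km) := by
      intro hsub
      apply hn2
      rw [DE, Finset.mem_filter]
      exact ⟨Finset.mem_univ _, hsub, hT3, AE_mono hsub2 hTAE⟩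
    obtain ⟨x, hxT, hxn1⟩ := Finset.not_subset.1 hnsub1
    obtain ⟨y, hyT, hyn2⟩ := Finset.not_subset.1 hnsub2
    have hxarc : gap a x < L := by rw [← mem_arc_iff hLn]; exact hTsub hxT
    have hyarc : gap a y < L := by rw [← mem_arc_iff hLn]; exact hTsub hyT
    have hox1 : km + 1 ≤ gap a x := by
      by_contra h; push_neg at h
      exact hxn1 ((mem_arc_iff (by omega)).2 (by omega))
    have hoy : gap a y < km := by
      by_contra h; push_neg at h
      apply hyn2
      rw [mem_arc_iff (by omega)]
      have hby : gap b y = gap a y - gap a b := gap_sub (by rw [hgab]; omega)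
      rw [hgab] at hby
      omega
    -- circle data of T
    obtain ⟨O, R, hmemT, houtT⟩ := hTAE
    have hR0 : 0 ≤ R := by
      obtain ⟨v0, hv0⟩ := Finset.card_pos.1 (show 0 < T.card by rw [hT3]; omega)
      rw [← hmemT v0 hv0]; exact dist_nonneg
    have hpow0 : ∀ v ∈ T, d2 (V v) O = R ^ 2 := by
      intro v hv; rw [← dist_sq, hmemT v hv]
    have hpowge : ∀ z ∈ Arc a L, R ^ 2 ≤ d2 (V z) O := by
      intro z hz
      rw [← dist_sq]
      exact pow_le_pow_left₀ hR0 (houtT z hz) 2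
    have hpow1_pos : ∀ z : ZMod n, z ≠ a → z ≠ b → z ≠ c → d2 (V a) O1 < d2 (V z) O1 := by
      intro z hza hzb hzc
      rcases lt_or_eq_of_le (hO1min z) with h | h
      · exact h
      · exfalso
        exact no_four_conc hgen hba.symm hca.symm (Ne.symm hza)
          hbc (Ne.symm hzb) (Ne.symm hzc) hO1b.symm hO1c.symm h
    obtain ⟨f0, f1, f2, hf⟩ := diff_affine O O1 (R ^ 2) (d2 (V a) O1)
    have hfval : ∀ z : ZMod n, f0 + f1 * (V z) 0 + f2 * (V z) 1
        = (d2 (V z) O - R ^ 2) - (d2 (V z) O1 - d2 (V a) O1) := fun z => (hf (V z)).symm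
    have hfT1 : ∀ z : ZMod n, z ∈ Arc a L → (z = a ∨ z = b ∨ z = c) →
        0 ≤ f0 + f1 * (V z) 0 + f2 * (V z) 1 := by
      intro z hz h3
      rw [hfval]
      have h4 := hpowge z hz
      rcases h3 with rfl | rfl | rfl
      · linarith
      · linarith [hO1b]
      · linarith [hO1c]
    have hfTle : ∀ z ∈ T, f0 + f1 * (V z) 0 + f2 * (V z) 1 ≤ 0 := by
      intro z hz
      rw [hfval]
      have h4 := hpow0 z hz
      have h5 := hO1min z
      linarith
    have hfTlt : ∀ z ∈ T, z ≠ a → z ≠ b → z ≠ c → f0 + f1 * (V z) 0 + f2 * (V z) 1 < 0 := by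
      intro z hz hza hzb hzc
      rw [hfval]
      have h4 := hpow0 z hz
      have h5 := hpow1_pos z hza hzb hzc
      linarith
    have haArc : a ∈ Arc a L := hT1sub (by rw [hT1def]; simp)
    have hbArc : b ∈ Arc a L := hT1sub (by rw [hT1def]; simp)
    have hcArc : c ∈ Arc a L := hT1sub (by rw [hT1def]; simp)
    rcases Nat.eq_zero_or_pos (gap a y) with hoy0 | hoy1
    case inl =>
      -- y = a
      have hya : y = a := by rw [hxrep y, hoy0]; simp
      rw [hya] at hyT
      rcases eq_or_lt_of_le (show gap a x ≤ L - 1 by omega) with hoxL | hoxlt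
      case inl =>
        -- x = c : case D
        have hxc : x = c := by rw [hxrep x, hoxL, ← hc]
        rw [hxc] at hxT
        obtain ⟨z, hza, hzc, hTeq⟩ := three_elt hT3 hyT hxT hca.symm
        have hzT : z ∈ T := by rw [hTeq]; simp
        have hzarc : gap a z < L := by rw [← mem_arc_iff hLn]; exact hTsub hzT
        have hgz0 : gap a z ≠ 0 := fun h => hza (by rw [hxrep z, h]; simp)
        have hgzc : gap a z ≠ L - 1 := fun h => hzc (by rw [hxrep z, h, ← hc])
        by_cases hzb : z = b
        · rw [hTeq, hzb, hT1def]
        · exfalso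
          have hdz : det2 (V a) (V c) (V z) < 0 := hside_int z (by omega) (by omega)
          have hOac : d2 (V a) O = d2 (V c) O := by rw [hpow0 a hyT, hpow0 c hxT]
          obtain ⟨s0, hs0⟩ := exists_param (V a) (V c) hVca hOac
          have hz_on : d2 (V z) O - d2 (V a) O = 0 := by rw [hpow0 z hzT, hpow0 a hyT]; ring
          rw [hs0] at hz_on
          rw [hpow s0 z] at hz_on
          have hself := pow_t_self (V a) (V c) (x := V z) (ne_of_lt hdz)
          have hs0z : s0 = tpar (V a) (V c) (V z) := by
            have h2 : (s0 - tpar (V a) (V c) (V z)) * (2 * det2 (V a) (V c) (V z)) = 0 := by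
              linarith [hz_on, hself]
            rcases mul_eq_zero.1 h2 with h | h
            · linarith
            · linarith
          have hb_out : R ^ 2 ≤ d2 (V b) O := hpowge b hbArc
          have hb_pow : 0 ≤ pq (V a) (V c) (V b) - s0 * (2 * det2 (V a) (V c) (V b)) := by
            have h1 := hpow s0 b
            rw [← hs0] at h1
            have h2 : d2 (V a) O = R ^ 2 := hpow0 a hyT
            linarith
          have h1 : s1 ≤ s0 := (pow_t_neg (V a) (V c) hdb s0).1 hb_pow
          have hz_pow1 : 0 ≤ pq (V a) (V c) (V z) - s1 * (2 * det2 (V a) (V c) (V z)) := by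
            have h2 := hpow s1 z
            rw [← hO1] at h2
            linarith [hO1min z]
          have h2 : tpar (V a) (V c) (V z) ≤ s1 := (pow_t_neg (V a) (V c) hdz s1).1 hz_pow1
          -- so tpar z = s1 and z lies on circle O1 : contradiction with genericity
          have h3 : d2 (V z) O1 = d2 (V a) O1 := by
            have h4 := hpow s1 z
            rw [← hO1] at h4
            have h5 : s1 = tpar (V a) (V c) (V z) := by linarith [hs0z]
            rw [h5] at h4
            linarith [hself]
          exact no_four_conc hgen hba.symm hca.symm (Ne.symm hza) hbc (Ne.symm hzb)
            (Ne.symm hzc) hO1b.symm hO1c.symm h3.symm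
      case inr =>
        -- case B : a ∈ T, x interior beyond b
        exfalso
        have hxa : x ≠ a := hne_gap x a (by rw [gap_self]; omega)
        have hxb : x ≠ b := hne_gap x b (by rw [hgab]; omega)
        have hxc : x ≠ c := hne_gap x c (by rw [hgac]; omega)
        have dB1 : 0 < det2 (V b) (V c) (V a) := by
          have h1 := chord_pos hn hconv (a := b) (i := L - 1 - km) (j := n - km)
            (by omega) (by omega) (by omega)
          have e1 : b + ((L - 1 - km : ℕ) : ZMod n) = c := by
            rw [show L - 1 - km = L - km - 1 by omega]; exact e_bc
          have e2 : b + ((n - km : ℕ) : ZMod n) = a := by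
            rw [hbdef]; exact (reb2 (by omega)).symm
          rwa [e1, e2] at h1
        have dB2 : det2 (V b) (V c) (V x) < 0 := by
          have h1 := chord_pos hn hconv (a := b) (i := gap a x - km) (j := L - 1 - km)
            (by omega) (by omega) (by omega)
          have e1 : b + ((gap a x - km : ℕ) : ZMod n) = x := by
            rw [hbdef, ← reb1 (by omega : km ≤ gap a x)]
            exact (hxrep x).symm
          have e2 : b + ((L - 1 - km : ℕ) : ZMod n) = c := by
            rw [show L - 1 - km = L - km - 1 by omega]; exact e_bc
          rw [e1, e2] at h1
          have h4 := det2_swap (V b) (V c) (V x)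
          linarith
        have dB3 : det2 (V a) (V x) (V b) < 0 := by
          have h1 := chord_pos hn hconv (a := a) (i := km) (j := gap a x)
            (by omega) (by omega) (by omega)
          rw [← hbdef, ← hxrep x] at h1
          have h4 := det2_swap (V a) (V x) (V b)
          have h5 := det2_swap (V a) (V b) (V x)
          linarith
        have dB4 : 0 < det2 (V a) (V x) (V c) := by
          have h1 := chord_pos hn hconv (a := a) (i := gap a x) (j := L - 1)
            (by omega) (by omega) (by omega)
          rwa [← hxrep x, ← hc] at h1
        exact no_cross f0 f1 f2 (V b) (V c) (V a) (V x)
          (hfT1 b hbArc (Or.inr (Or.inl rfl))) (hfT1 c hcArc (Or.inr (Or.inr rfl)))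
          (hfTle a hyT) (hfTlt x hxT hxa hxb hxc)
          dB1 dB2 (mul_neg_of_neg_of_pos dB3 dB4)
    case inr =>
      -- y interior before b
      have hya : y ≠ a := hne_gap y a (by rw [gap_self]; omega)
      have hyb : y ≠ b := hne_gap y b (by rw [hgab]; omega)
      have hyc : y ≠ c := hne_gap y c (by rw [hgac]; omega)
      have dA2 : det2 (V a) (V b) (V y) < 0 := by
        have h1 := chord_pos hn hconv (a := a) (i := gap a y) (j := km)
          (by omega) (by omega) (by omega)
        rw [← hbdef, ← hxrep y] at h1
        have h4 := det2_swap (V a) (V b) (V y)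
        linarith
      rcases eq_or_lt_of_le (show gap a x ≤ L - 1 by omega) with hoxL | hoxlt
      case inl =>
        -- case C : x = c
        exfalso
        have hxc : x = c := by rw [hxrep x, hoxL, ← hc]
        rw [hxc] at hxT
        have dC1 : 0 < det2 (V a) (V b) (V c) := by
          have h1 := chord_pos hn hconv (a := a) (i := km) (j := L - 1)
            (by omega) (by omega) (by omega)
          rwa [← hbdef, ← hc] at h1
        have dC3 : det2 (V c) (V y) (V a) < 0 := by
          have h1 := chord_pos hn hconv (a := c) (i := n - (L - 1)) (j := n - (L - 1) + gap a y)
            (by omega) (by omega) (by omega)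
          have e1 : c + ((n - (L - 1) : ℕ) : ZMod n) = a := by
            rw [hc]; exact (reb2 (by omega)).symm
          have e2 : c + ((n - (L - 1) + gap a y : ℕ) : ZMod n) = y := by
            rw [hc, reb3 (L - 1) (gap a y) (by omega)]
            exact (hxrep y).symm
          rw [e1, e2] at h1
          have h4 := det2_swap (V c) (V y) (V a)
          have h5 := det2_swap (V c) (V a) (V y)
          linarith
        have dC4 : 0 < det2 (V c) (V y) (V b) := by
          have h1 := chord_pos hn hconv (a := c) (i := n - (L - 1) + gap a y) (j := n - (L - 1) + km)
            (by omega) (by omega) (by omega)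
          have e2 : c + ((n - (L - 1) + gap a y : ℕ) : ZMod n) = y := by
            rw [hc, reb3 (L - 1) (gap a y) (by omega)]
            exact (hxrep y).symm
          have e3 : c + ((n - (L - 1) + km : ℕ) : ZMod n) = b := by
            rw [hc, reb3 (L - 1) km (by omega)]
          rwa [e2, e3] at h1
        exact no_cross f0 f1 f2 (V a) (V b) (V c) (V y)
          (hfT1 a haArc (Or.inl rfl)) (hfT1 b hbArc (Or.inr (Or.inl rfl)))
          (hfTle c hxT) (hfTlt y hyT hya hyb hyc)
          dC1 dA2 (mul_neg_of_neg_of_pos dC3 dC4)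
      case inr =>
        -- case A
        exfalso
        have hxa : x ≠ a := hne_gap x a (by rw [gap_self]; omega)
        have hxb : x ≠ b := hne_gap x b (by rw [hgab]; omega)
        have hxc : x ≠ c := hne_gap x c (by rw [hgac]; omega)
        have dA1 : 0 < det2 (V a) (V b) (V x) := by
          have h1 := chord_pos hn hconv (a := a) (i := km) (j := gap a x)
            (by omega) (by omega) (by omega)
          rwa [← hbdef, ← hxrep x] at h1
        have dA3 : det2 (V x) (V y) (V a) < 0 := by
          have h1 := chord_pos hn hconv (a := x) (i := n - gap a x) (j := n - gap a x + gap a y)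
            (by omega) (by omega) (by omega)
          have e1 : x + ((n - gap a x : ℕ) : ZMod n) = a := by
            have h9 := (reb2 (a := a) (o := gap a x) (by omega)).symm
            rwa [← hxrep x] at h9
          have e2 : x + ((n - gap a x + gap a y : ℕ) : ZMod n) = y := by
            have h9 := reb3 (gap a x) (gap a y) (by omega)
            rwa [← hxrep x, ← hxrep y] at h9
          rw [e1, e2] at h1
          have h4 := det2_swap (V x) (V y) (V a)
          have h5 := det2_swap (V x) (V a) (V y)
          linarith
        have dA4 : 0 < det2 (V x) (V y) (V b) := by
          have h1 := chord_pos hn hconv (a := x) (i := n - gap a x + gap a y) (j := n - gap a x + km)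
            (by omega) (by omega) (by omega)
          have e2 : x + ((n - gap a x + gap a y : ℕ) : ZMod n) = y := by
            have h9 := reb3 (gap a x) (gap a y) (by omega)
            rwa [← hxrep x, ← hxrep y] at h9
          have e3 : x + ((n - gap a x + km : ℕ) : ZMod n) = b := by
            have h9 := reb3 (gap a x) km (by omega)
            rwa [← hxrep x, ← hbdef] at h9
          rwa [e2, e3] at h1
        exact no_cross f0 f1 f2 (V a) (V b) (V x) (V y)
          (hfT1 a haArc (Or.inl rfl)) (hfT1 b hbArc (Or.inr (Or.inl rfl)))
          (hfTle x hxT) (hfTlt y hyT hya hyb hyc)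
          dA1 dA2 (mul_neg_of_neg_of_pos dA3 dA4)

  -- membership exclusions
  have hgba : gap b a = n - km := by
    have := gap_add_gap (u := a) (v := b) hba.symm
    omega
  have hT1n1 : T1 ∉ DE V (Arc a (km + 1)) := by
    intro h
    rw [DE, Finset.mem_filter] at h
    have := h.2.1 (show c ∈ T1 by rw [hT1def]; simp)
    rw [mem_arc_iff (by omega), gap_cast hLm1] at this
    omega
  have hT1n2 : T1 ∉ DE V (Arc b (L - km)) := by
    intro h
    rw [DE, Finset.mem_filter] at h
    have := h.2.1 (show a ∈ T1 by rw [hT1def]; simp)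
    rw [mem_arc_iff (by omega), hgba] at this
    omega
  have hdisj : Disjoint (DE V (Arc a (km + 1))) (DE V (Arc b (L - km))) := by
    rw [Finset.disjoint_left]
    intro T h1 h2
    rw [DE, Finset.mem_filter] at h1 h2
    have hsub : T ⊆ {b} := by
      intro x hx
      have m1 := h1.2.1 hx
      have m2 := h2.2.1 hx
      have g2 := hgap2 x m2
      rw [mem_arc_iff (by omega)] at m1 m2
      have : gap b x = 0 := by omega
      rw [Finset.mem_singleton, ← add_gap b x, this]; simp
    have := Finset.card_le_card hsub
    rw [h1.2.2.1] at this
    simp at this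
  have hEeq : DE V (Arc a L) = insert T1 (DE V (Arc a (km + 1)) ∪ DE V (Arc b (L - km))) := by
    ext T
    rw [Finset.mem_insert, Finset.mem_union]
    constructor
    · intro hT
      by_cases h1 : T ∈ DE V (Arc a (km + 1))
      · exact Or.inr (Or.inl h1)
      by_cases h2 : T ∈ DE V (Arc b (L - km))
      · exact Or.inr (Or.inr h2)
      · exact Or.inl (hcov T hT h1 h2)
    · rintro (rfl | hT | hT)
      · exact hT1mem
      · exact hE1sub hT
      · exact hE2sub hT
  have hT1notin : T1 ∉ DE V (Arc a (km + 1)) ∪ DE V (Arc b (L - km)) := by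
    rw [Finset.mem_union]; rintro (h | h)
    · exact hT1n1 h
    · exact hT1n2 h
  constructor
  · rw [hEeq, Finset.card_insert_of_notMem hT1notin, Finset.card_union_of_disjoint hdisj,
      hcard1, hcard2]
    omega
  · intro T hT
    rw [hEeq, Finset.mem_insert, Finset.mem_union] at hT
    rcases hT with rfl | hT | hT
    · exact hT1E
    · exact hglob1 T hT
    · exact hglob2 T hT

end maine
-- chunk 6 : dual pencil lemmas + main induction (full circles)
section pencilt2
variable (A B : Pt)

lemma pow_t_neg_le {x : Pt} (hD : det2 A B x < 0) (s : ℝ) :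
    pq A B x - s * (2 * det2 A B x) ≤ 0 ↔ s ≤ tpar A B x := by
  rw [tpar, le_div_iff_of_neg (by linarith)]
  constructor <;> intro h <;> nlinarith [h]

lemma pow_t_pos_le {x : Pt} (hD : 0 < det2 A B x) (s : ℝ) :
    pq A B x - s * (2 * det2 A B x) ≤ 0 ↔ tpar A B x ≤ s := by
  rw [tpar, div_le_iff₀ (by linarith)]
  constructor <;> intro h <;> nlinarith [h]

end pencilt2

section mainf
variable {n : ℕ} [NeZero n] {V : ZMod n → Pt}

set_option maxHeartbeats 1000000 in
/-- main induction, full-circle version -/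
lemma mainF (hn : 4 ≤ n) (hconv : ConvexCCW V) (hgen : GenericPoly V) :
    ∀ L : ℕ, 2 ≤ L → L ≤ n → ∀ (a : ZMod n) (Ow : Pt),
    d2 (V a) Ow = d2 (V (a + ((L - 1 : ℕ) : ZMod n))) Ow →
    (∀ x : ZMod n, x ≠ a → x ≠ a + ((L - 1 : ℕ) : ZMod n) → d2 (V x) Ow ≤ d2 (V a) Ow) →
    (DF V (Arc a L)).card = L - 2 ∧ ∀ T ∈ DF V (Arc a L), FullCircle V T := by
  intro L
  induction L using Nat.strong_induction_on with
  | _ L ih =>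
  intro hL2 hLn a Ow hOweq hOwmax
  by_cases hL2' : L ≤ 2
  · have hL : L = 2 := by omega
    subst hL
    have hDF : DF V (Arc a 2) = ∅ := by
      apply Finset.eq_empty_of_forall_notMem
      intro T hT
      rw [DF, Finset.mem_filter] at hT
      have hc := Finset.card_le_card hT.2.1
      have : (Arc a 2).card ≤ 2 := le_trans (Finset.card_image_le) (by simp)
      omega
    rw [hDF]
    exact ⟨rfl, fun T hT => absurd hT (by rw [hDF] at *; simp)⟩
  push_neg at hL2'
  have hL3 : 3 ≤ L := hL2'
  set c := a + ((L - 1 : ℕ) : ZMod n) with hc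
  have hLm1 : L - 1 < n := by omega
  have hca : c ≠ a := off_ne0 (by omega) hLm1
  have hVca : V a ≠ V c := fun h => hca (hconv.1 h).symm
  have hxrep : ∀ x : ZMod n, x = a + ((gap a x : ℕ) : ZMod n) := fun x => (add_gap a x).symm
  have hside_int : ∀ x : ZMod n, 0 < gap a x → gap a x < L - 1 → det2 (V a) (V c) (V x) < 0 := by
    intro x h1 h2
    have h3 := chord_pos hn hconv (a := a) (i := gap a x) (j := L - 1) h1 h2 hLm1
    rw [← hxrep x, ← hc] at h3
    have h4 := det2_swap (V a) (V c) (V x)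
    linarith
  have hside_ext : ∀ x : ZMod n, L - 1 < gap a x → 0 < det2 (V a) (V c) (V x) := by
    intro x h1
    have h3 := chord_pos hn hconv (a := a) (i := L - 1) (j := gap a x) (by omega) h1 (gap_lt a x)
    rw [← hxrep x, ← hc] at h3
    exact h3
  have hpow : ∀ (s : ℝ) (x : ZMod n),
      d2 (V x) (pc (V a) (V c) s) - d2 (V a) (pc (V a) (V c) s)
        = pq (V a) (V c) (V x) - s * (2 * det2 (V a) (V c) (V x)) :=
    fun s x => pow_pc (V a) (V c) s (V x)
  have hgac : gap a c = L - 1 := by rw [hc]; exact gap_cast hLm1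
  have hne_gap : ∀ z w : ZMod n, gap a z ≠ gap a w → z ≠ w := by
    intro z w h hzw; exact h (by rw [hzw])
  have reb3 : ∀ (o g : ℕ), o ≤ n → (a + (o : ZMod n)) + ((n - o + g : ℕ) : ZMod n) = a + (g : ZMod n) := by
    intro o g ho
    push_cast [Nat.cast_sub ho]
    rw [ZMod.natCast_self]; ring
  -- witness parameter
  obtain ⟨sw, hsw⟩ := exists_param (V a) (V c) hVca hOweq
  have hwit_pow : ∀ x : ZMod n, x ≠ a → x ≠ c →
      pq (V a) (V c) (V x) - sw * (2 * det2 (V a) (V c) (V x)) ≤ 0 := by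
    intro x hxa hxc
    have h1 := hOwmax x hxa hxc
    rw [hsw] at h1
    have h2 := hpow sw x
    linarith
  -- interior argmin
  have hitr_ne : (Finset.Icc 1 (L - 2)).Nonempty := ⟨1, by simp; omega⟩
  obtain ⟨km, hkm_mem, hkm_min⟩ := Finset.exists_min_image (Finset.Icc 1 (L - 2))
    (fun k => tpar (V a) (V c) (V (a + (k : ZMod n)))) hitr_ne
  rw [Finset.mem_Icc] at hkm_mem
  set b := a + ((km : ℕ) : ZMod n) with hbdef
  have hgab : gap a b = km := gap_cast (by omega)
  set s1 := tpar (V a) (V c) (V b) with hs1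
  set O1 := pc (V a) (V c) s1 with hO1
  have hdb : det2 (V a) (V c) (V b) < 0 := hside_int b (by omega) (by omega)
  have hO1b : d2 (V b) O1 = d2 (V a) O1 := by
    have h1 := hpow s1 b
    have h2 := pow_t_self (V a) (V c) (x := V b) (ne_of_lt hdb)
    rw [hO1]; rw [← hs1] at h2; linarith
  have hO1c : d2 (V c) O1 = d2 (V a) O1 := (pc_equidist (V a) (V c) s1).symm
  have hba : b ≠ a := off_ne0 (by omega) (by omega)
  have hbc : b ≠ c := off_ne (by omega) hLm1 (by omega)
  have hsw1 : sw ≤ s1 :=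
    (pow_t_neg_le (V a) (V c) hdb sw).1 (hwit_pow b hba hbc)
  -- O1 gives a full circle
  have hO1max : ∀ x : ZMod n, x ≠ a → x ≠ b → x ≠ c → d2 (V x) O1 < d2 (V a) O1 := by
    intro x hxa hxb hxc
    have hgx := gap_lt a x
    have hgx0 : gap a x ≠ 0 := fun h => hxa (by rw [hxrep x, h]; simp)
    have hgxc : gap a x ≠ L - 1 := fun h => hxc (by rw [hxrep x, h, ← hc])
    have hgxb : gap a x ≠ km := fun h => hxb (by rw [hxrep x, h, ← hbdef])
    have hx := hpow s1 x
    suffices h : pq (V a) (V c) (V x) - s1 * (2 * det2 (V a) (V c) (V x)) < 0 by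
      rw [hO1]; linarith
    rcases Nat.lt_or_ge (gap a x) L with hin | hout
    · -- interior
      have hd := hside_int x (by omega) (by omega)
      have hmin := hkm_min (gap a x) (Finset.mem_Icc.2 ⟨by omega, by omega⟩)
      rw [← hxrep x] at hmin
      -- s1 ≤ tpar x ; strictness by genericity
      rcases eq_or_lt_of_le hmin with heq | hlt
      · exfalso
        have h2 := pow_t_self (V a) (V c) (x := V x) (ne_of_lt hd)
        rw [← heq] at h2
        have h3 : d2 (V x) O1 = d2 (V a) O1 := by rw [hO1]; linarith
        exact no_four_conc hgen hba.symm hca.symm (Ne.symm hxa) hbc (Ne.symm hxb)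
          (Ne.symm hxc) hO1b.symm hO1c.symm h3.symm
      · exact (pow_t_neg_lt (V a) (V c) hd s1).2 hlt
    · -- exterior
      have hd := hside_ext x (by omega)
      have h2 : tpar (V a) (V c) (V x) ≤ sw :=
        (pow_t_pos_le (V a) (V c) hd sw).1 (hwit_pow x hxa hxc)
      have h3 : tpar (V a) (V c) (V x) ≤ s1 := le_trans h2 hsw1
      rcases eq_or_lt_of_le h3 with heq | hlt
      · exfalso
        have h4 := pow_t_self (V a) (V c) (x := V x) (ne_of_gt hd)
        rw [heq] at h4
        have h5 : d2 (V x) O1 = d2 (V a) O1 := by rw [hO1]; linarith [hpow s1 x]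
        exact no_four_conc hgen hba.symm hca.symm (Ne.symm hxa) hbc (Ne.symm hxb)
          (Ne.symm hxc) hO1b.symm hO1c.symm h5.symm
      · exact (pow_t_pos_lt (V a) (V c) hd s1).2 hlt
  have hpow1le : ∀ z : ZMod n, d2 (V z) O1 ≤ d2 (V a) O1 := by
    intro z
    by_cases h1 : z = a
    · rw [h1]
    by_cases h2 : z = b
    · rw [h2, hO1b]
    by_cases h3 : z = c
    · rw [h3, hO1c]
    exact (hO1max z h1 h2 h3).le
  -- the middle triangle
  set T1 : Finset (ZMod n) := {a, b, c} with hT1def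
  have hT1card : T1.card = 3 := trip_card hba hbc hca.symm
  have hT1sub : T1 ⊆ Arc a L := by
    intro x hx
    rw [hT1def, Finset.mem_insert, Finset.mem_insert, Finset.mem_singleton] at hx
    rw [mem_arc_iff hLn]
    rcases hx with rfl | rfl | rfl
    · rw [gap_self]; omega
    · rw [hgab]; omega
    · rw [gap_cast hLm1]; omega
  have hT1F : FullCircle V T1 := by
    refine ⟨O1, dist (V a) O1, ?_, ?_⟩
    · intro v hv
      rw [hT1def, Finset.mem_insert, Finset.mem_insert, Finset.mem_singleton] at hv
      rcases hv with rfl | rfl | rfl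
      · rfl
      · exact dist_eq_iff.2 hO1b
      · exact dist_eq_iff.2 hO1c
    · intro j hj
      rw [hT1def, Finset.mem_insert, Finset.mem_insert, Finset.mem_singleton] at hj
      push_neg at hj
      exact dist_lt_iff.2 (hO1max j hj.1 hj.2.1 hj.2.2)
  have hT1mem : T1 ∈ DF V (Arc a L) := by
    rw [DF, Finset.mem_filter]
    exact ⟨Finset.mem_univ _, hT1sub, hT1card, fullCircle_of_arc V hT1F _⟩
  -- sub-arc witnesses and IH
  have e_bc : b + ((L - km - 1 : ℕ) : ZMod n) = c := by
    rw [hbdef, hc]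
    have h1 : ((L - km - 1 : ℕ) : ZMod n) = ((L - 1 : ℕ) : ZMod n) - ((km : ℕ) : ZMod n) := by
      rw [show L - km - 1 = (L-1) - km by omega, Nat.cast_sub (by omega)]
    rw [h1]; ring
  have IH1 := ih (km + 1) (by omega) (by omega) (by omega) a O1
    (by simp only [Nat.add_sub_cancel]; rw [← hbdef]; exact hO1b.symm)
    (by intro x hxa hxb
        simp only [Nat.add_sub_cancel] at hxb
        rw [← hbdef] at hxb
        exact hpow1le x)
  have IH2 := ih (L - km) (by omega) (by omega) (by omega) b O1
    (by rw [e_bc, hO1b, hO1c])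
    (by intro x hxb hxc
        rw [e_bc] at hxc
        rw [hO1b]
        exact hpow1le x)
  obtain ⟨hcard1, hglob1⟩ := IH1
  obtain ⟨hcard2, hglob2⟩ := IH2
  have hsub1 : Arc a (km + 1) ⊆ Arc a L := by
    intro x hx
    rw [mem_arc_iff (by omega)] at hx
    rw [mem_arc_iff hLn]; omega
  have hgap2 : ∀ x : ZMod n, x ∈ Arc b (L - km) → gap a x = km + gap b x := by
    intro x hx
    rw [mem_arc_iff (by omega)] at hx
    have h1 : a + ((km + gap b x : ℕ) : ZMod n) = x := by
      rw [Nat.cast_add, ← add_assoc, ← hbdef]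
      exact add_gap b x
    calc gap a x = gap a (a + ((km + gap b x : ℕ) : ZMod n)) := by rw [h1]
      _ = km + gap b x := gap_cast (by omega)
  have hsub2 : Arc b (L - km) ⊆ Arc a L := by
    intro x hx
    have h1 := hgap2 x hx
    rw [mem_arc_iff (by omega)] at hx
    rw [mem_arc_iff hLn]; omega
  have hE1sub : DF V (Arc a (km + 1)) ⊆ DF V (Arc a L) := by
    intro T hT
    rw [DF, Finset.mem_filter] at hT ⊢
    exact ⟨Finset.mem_univ _, hT.2.1.trans hsub1, hT.2.2.1,
      fullCircle_of_arc V (hglob1 T (by rw [DF, Finset.mem_filter]; exact hT)) _⟩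
  have hE2sub : DF V (Arc b (L - km)) ⊆ DF V (Arc a L) := by
    intro T hT
    rw [DF, Finset.mem_filter] at hT ⊢
    exact ⟨Finset.mem_univ _, hT.2.1.trans hsub2, hT.2.2.1,
      fullCircle_of_arc V (hglob2 T (by rw [DF, Finset.mem_filter]; exact hT)) _⟩
  -- coverage
  have hcov : ∀ T ∈ DF V (Arc a L), T ∉ DF V (Arc a (km + 1)) → T ∉ DF V (Arc b (L - km)) → T = T1 := by
    intro T hT hn1 hn2
    rw [DF, Finset.mem_filter] at hT
    obtain ⟨-, hTsub, hT3, hTAF⟩ := hT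
    have hnsub1 : ¬ T ⊆ Arc a (km + 1) := by
      intro hsub
      apply hn1
      rw [DF, Finset.mem_filter]
      exact ⟨Finset.mem_univ _, hsub, hT3, AF_mono hsub1 hTAF⟩
    have hnsub2 : ¬ T ⊆ Arc b (L - km) := by
      intro hsub
      apply hn2
      rw [DF, Finset.mem_filter]
      exact ⟨Finset.mem_univ _, hsub, hT3, AF_mono hsub2 hTAF⟩
    obtain ⟨x, hxT, hxn1⟩ := Finset.not_subset.1 hnsub1
    obtain ⟨y, hyT, hyn2⟩ := Finset.not_subset.1 hnsub2
    have hxarc : gap a x < L := by rw [← mem_arc_iff hLn]; exact hTsub hxT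
    have hyarc : gap a y < L := by rw [← mem_arc_iff hLn]; exact hTsub hyT
    have hox1 : km + 1 ≤ gap a x := by
      by_contra h; push_neg at h
      exact hxn1 ((mem_arc_iff (by omega)).2 (by omega))
    have hoy : gap a y < km := by
      by_contra h; push_neg at h
      apply hyn2
      rw [mem_arc_iff (by omega)]
      have hby : gap b y = gap a y - gap a b := gap_sub (by rw [hgab]; omega)
      rw [hgab] at hby
      omega
    obtain ⟨O, R, hmemT, houtT⟩ := hTAF
    have hR0 : 0 ≤ R := by
      obtain ⟨v0, hv0⟩ := Finset.card_pos.1 (show 0 < T.card by rw [hT3]; omega)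
      rw [← hmemT v0 hv0]; exact dist_nonneg
    have hpow0 : ∀ v ∈ T, d2 (V v) O = R ^ 2 := by
      intro v hv; rw [← dist_sq, hmemT v hv]
    have hpowle : ∀ z ∈ Arc a L, d2 (V z) O ≤ R ^ 2 := by
      intro z hz
      by_cases hzT : z ∈ T
      · rw [hpow0 z hzT]
      · have h1 := houtT z hz hzT
        rw [← dist_sq]
        nlinarith [dist_nonneg (x := V z) (y := O)]
    -- radical line (dual orientation)
    obtain ⟨f0, f1, f2, hf⟩ := diff_affine O1 O (d2 (V a) O1) (R ^ 2)
    have hfval : ∀ z : ZMod n, f0 + f1 * (V z) 0 + f2 * (V z) 1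
        = (d2 (V z) O1 - d2 (V a) O1) - (d2 (V z) O - R ^ 2) := fun z => (hf (V z)).symm
    have hfT1 : ∀ z : ZMod n, z ∈ Arc a L → (z = a ∨ z = b ∨ z = c) →
        0 ≤ f0 + f1 * (V z) 0 + f2 * (V z) 1 := by
      intro z hz h3
      rw [hfval]
      have h4 := hpowle z hz
      rcases h3 with rfl | rfl | rfl
      · linarith
      · linarith [hO1b]
      · linarith [hO1c]
    have hfTle : ∀ z ∈ T, f0 + f1 * (V z) 0 + f2 * (V z) 1 ≤ 0 := by
      intro z hz
      rw [hfval]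
      have h4 := hpow0 z hz
      have h5 := hpow1le z
      linarith
    have hfTlt : ∀ z ∈ T, z ≠ a → z ≠ b → z ≠ c → f0 + f1 * (V z) 0 + f2 * (V z) 1 < 0 := by
      intro z hz hza hzb hzc
      rw [hfval]
      have h4 := hpow0 z hz
      have h5 := hO1max z hza hzb hzc
      linarith
    have haArc : a ∈ Arc a L := hT1sub (by rw [hT1def]; simp)
    have hbArc : b ∈ Arc a L := hT1sub (by rw [hT1def]; simp)
    have hcArc : c ∈ Arc a L := hT1sub (by rw [hT1def]; simp)
    rcases Nat.eq_zero_or_pos (gap a y) with hoy0 | hoy1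
    case inl =>
      have hya : y = a := by rw [hxrep y, hoy0]; simp
      rw [hya] at hyT
      rcases eq_or_lt_of_le (show gap a x ≤ L - 1 by omega) with hoxL | hoxlt
      case inl =>
        -- x = c : case D
        have hxc : x = c := by rw [hxrep x, hoxL, ← hc]
        rw [hxc] at hxT
        obtain ⟨z, hza, hzc, hTeq⟩ := three_elt hT3 hyT hxT hca.symm
        have hzT : z ∈ T := by rw [hTeq]; simp
        have hzarc : gap a z < L := by rw [← mem_arc_iff hLn]; exact hTsub hzT
        have hgz0 : gap a z ≠ 0 := fun h => hza (by rw [hxrep z, h]; simp)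
        have hgzc : gap a z ≠ L - 1 := fun h => hzc (by rw [hxrep z, h, ← hc])
        by_cases hzb : z = b
        · rw [hTeq, hzb, hT1def]
        · exfalso
          have hdz : det2 (V a) (V c) (V z) < 0 := hside_int z (by omega) (by omega)
          have hOac : d2 (V a) O = d2 (V c) O := by rw [hpow0 a hyT, hpow0 c hxT]
          obtain ⟨s0, hs0⟩ := exists_param (V a) (V c) hVca hOac
          have hz_on : d2 (V z) O - d2 (V a) O = 0 := by rw [hpow0 z hzT, hpow0 a hyT]; ring
          rw [hs0] at hz_on
          rw [hpow s0 z] at hz_on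
          have hself := pow_t_self (V a) (V c) (x := V z) (ne_of_lt hdz)
          have hs0z : s0 = tpar (V a) (V c) (V z) := by
            have h2 : (s0 - tpar (V a) (V c) (V z)) * (2 * det2 (V a) (V c) (V z)) = 0 := by
              linarith [hz_on, hself]
            rcases mul_eq_zero.1 h2 with h | h
            · linarith
            · linarith
          -- b is strictly inside the T circle
          have hbT : b ∉ T := by
            rw [hTeq, Finset.mem_insert, Finset.mem_insert, Finset.mem_singleton]
            push_neg
            exact ⟨hba, fun h => hzb h.symm, hbc⟩
          have hb_in : d2 (V b) O < R ^ 2 := by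
            have h1 := houtT b hbArc hbT
            rw [← dist_sq]
            nlinarith [dist_nonneg (x := V b) (y := O)]
          have hb_pow : pq (V a) (V c) (V b) - s0 * (2 * det2 (V a) (V c) (V b)) < 0 := by
            have h1 := hpow s0 b
            rw [← hs0] at h1
            have h2 : d2 (V a) O = R ^ 2 := hpow0 a hyT
            linarith
          have h1 : s0 < s1 := (pow_t_neg_lt (V a) (V c) hdb s0).1 hb_pow
          -- z is strictly inside circle O1
          have hz_in : d2 (V z) O1 < d2 (V a) O1 := hO1max z hza hzb hzc
          have hz_pow1 : pq (V a) (V c) (V z) - s1 * (2 * det2 (V a) (V c) (V z)) < 0 := by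
            have h2 := hpow s1 z
            rw [← hO1] at h2
            linarith
          have h2 : s1 < tpar (V a) (V c) (V z) := (pow_t_neg_lt (V a) (V c) hdz s1).1 hz_pow1
          rw [hs0z] at h1
          linarith
      case inr =>
        -- case B
        exfalso
        have hxa : x ≠ a := hne_gap x a (by rw [gap_self]; omega)
        have hxb : x ≠ b := hne_gap x b (by rw [hgab]; omega)
        have hxc : x ≠ c := hne_gap x c (by rw [hgac]; omega)
        have dB1 : 0 < det2 (V b) (V c) (V a) := by
          have h1 := chord_pos hn hconv (a := b) (i := L - 1 - km) (j := n - km)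
            (by omega) (by omega) (by omega)
          have e1 : b + ((L - 1 - km : ℕ) : ZMod n) = c := by
            rw [show L - 1 - km = L - km - 1 by omega]; exact e_bc
          have e2 : b + ((n - km : ℕ) : ZMod n) = a := by
            rw [hbdef]; exact (reb2 (by omega)).symm
          rwa [e1, e2] at h1
        have dB2 : det2 (V b) (V c) (V x) < 0 := by
          have h1 := chord_pos hn hconv (a := b) (i := gap a x - km) (j := L - 1 - km)
            (by omega) (by omega) (by omega)
          have e1 : b + ((gap a x - km : ℕ) : ZMod n) = x := by
            rw [hbdef, ← reb1 (by omega : km ≤ gap a x)]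
            exact (hxrep x).symm
          have e2 : b + ((L - 1 - km : ℕ) : ZMod n) = c := by
            rw [show L - 1 - km = L - km - 1 by omega]; exact e_bc
          rw [e1, e2] at h1
          have h4 := det2_swap (V b) (V c) (V x)
          linarith
        have dB3 : det2 (V a) (V x) (V b) < 0 := by
          have h1 := chord_pos hn hconv (a := a) (i := km) (j := gap a x)
            (by omega) (by omega) (by omega)
          rw [← hbdef, ← hxrep x] at h1
          have h4 := det2_swap (V a) (V x) (V b)
          have h5 := det2_swap (V a) (V b) (V x)
          linarith
        have dB4 : 0 < det2 (V a) (V x) (V c) := by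
          have h1 := chord_pos hn hconv (a := a) (i := gap a x) (j := L - 1)
            (by omega) (by omega) (by omega)
          rwa [← hxrep x, ← hc] at h1
        exact no_cross f0 f1 f2 (V b) (V c) (V a) (V x)
          (hfT1 b hbArc (Or.inr (Or.inl rfl))) (hfT1 c hcArc (Or.inr (Or.inr rfl)))
          (hfTle a hyT) (hfTlt x hxT hxa hxb hxc)
          dB1 dB2 (mul_neg_of_neg_of_pos dB3 dB4)
    case inr =>
      have hya : y ≠ a := hne_gap y a (by rw [gap_self]; omega)
      have hyb : y ≠ b := hne_gap y b (by rw [hgab]; omega)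
      have hyc : y ≠ c := hne_gap y c (by rw [hgac]; omega)
      have dA2 : det2 (V a) (V b) (V y) < 0 := by
        have h1 := chord_pos hn hconv (a := a) (i := gap a y) (j := km)
          (by omega) (by omega) (by omega)
        rw [← hbdef, ← hxrep y] at h1
        have h4 := det2_swap (V a) (V b) (V y)
        linarith
      rcases eq_or_lt_of_le (show gap a x ≤ L - 1 by omega) with hoxL | hoxlt
      case inl =>
        exfalso
        have hxc : x = c := by rw [hxrep x, hoxL, ← hc]
        rw [hxc] at hxT
        have dC1 : 0 < det2 (V a) (V b) (V c) := by
          have h1 := chord_pos hn hconv (a := a) (i := km) (j := L - 1)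
            (by omega) (by omega) (by omega)
          rwa [← hbdef, ← hc] at h1
        have dC3 : det2 (V c) (V y) (V a) < 0 := by
          have h1 := chord_pos hn hconv (a := c) (i := n - (L - 1)) (j := n - (L - 1) + gap a y)
            (by omega) (by omega) (by omega)
          have e1 : c + ((n - (L - 1) : ℕ) : ZMod n) = a := by
            rw [hc]; exact (reb2 (by omega)).symm
          have e2 : c + ((n - (L - 1) + gap a y : ℕ) : ZMod n) = y := by
            rw [hc, reb3 (L - 1) (gap a y) (by omega)]
            exact (hxrep y).symm
          rw [e1, e2] at h1
          have h4 := det2_swap (V c) (V y) (V a)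
          have h5 := det2_swap (V c) (V a) (V y)
          linarith
        have dC4 : 0 < det2 (V c) (V y) (V b) := by
          have h1 := chord_pos hn hconv (a := c) (i := n - (L - 1) + gap a y) (j := n - (L - 1) + km)
            (by omega) (by omega) (by omega)
          have e2 : c + ((n - (L - 1) + gap a y : ℕ) : ZMod n) = y := by
            rw [hc, reb3 (L - 1) (gap a y) (by omega)]
            exact (hxrep y).symm
          have e3 : c + ((n - (L - 1) + km : ℕ) : ZMod n) = b := by
            rw [hc, reb3 (L - 1) km (by omega)]
          rwa [e2, e3] at h1
        exact no_cross f0 f1 f2 (V a) (V b) (V c) (V y)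
          (hfT1 a haArc (Or.inl rfl)) (hfT1 b hbArc (Or.inr (Or.inl rfl)))
          (hfTle c hxT) (hfTlt y hyT hya hyb hyc)
          dC1 dA2 (mul_neg_of_neg_of_pos dC3 dC4)
      case inr =>
        exfalso
        have hxa : x ≠ a := hne_gap x a (by rw [gap_self]; omega)
        have hxb : x ≠ b := hne_gap x b (by rw [hgab]; omega)
        have hxc : x ≠ c := hne_gap x c (by rw [hgac]; omega)
        have dA1 : 0 < det2 (V a) (V b) (V x) := by
          have h1 := chord_pos hn hconv (a := a) (i := km) (j := gap a x)
            (by omega) (by omega) (by omega)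
          rwa [← hbdef, ← hxrep x] at h1
        have dA3 : det2 (V x) (V y) (V a) < 0 := by
          have h1 := chord_pos hn hconv (a := x) (i := n - gap a x) (j := n - gap a x + gap a y)
            (by omega) (by omega) (by omega)
          have e1 : x + ((n - gap a x : ℕ) : ZMod n) = a := by
            have h9 := (reb2 (a := a) (o := gap a x) (by omega)).symm
            rwa [← hxrep x] at h9
          have e2 : x + ((n - gap a x + gap a y : ℕ) : ZMod n) = y := by
            have h9 := reb3 (gap a x) (gap a y) (by omega)
            rwa [← hxrep x, ← hxrep y] at h9
          rw [e1, e2] at h1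
          have h4 := det2_swap (V x) (V y) (V a)
          have h5 := det2_swap (V x) (V a) (V y)
          linarith
        have dA4 : 0 < det2 (V x) (V y) (V b) := by
          have h1 := chord_pos hn hconv (a := x) (i := n - gap a x + gap a y) (j := n - gap a x + km)
            (by omega) (by omega) (by omega)
          have e2 : x + ((n - gap a x + gap a y : ℕ) : ZMod n) = y := by
            have h9 := reb3 (gap a x) (gap a y) (by omega)
            rwa [← hxrep x, ← hxrep y] at h9
          have e3 : x + ((n - gap a x + km : ℕ) : ZMod n) = b := by
            have h9 := reb3 (gap a x) km (by omega)
            rwa [← hxrep x, ← hbdef] at h9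
          rwa [e2, e3] at h1
        exact no_cross f0 f1 f2 (V a) (V b) (V x) (V y)
          (hfT1 a haArc (Or.inl rfl)) (hfT1 b hbArc (Or.inr (Or.inl rfl)))
          (hfTle x hxT) (hfTlt y hyT hya hyb hyc)
          dA1 dA2 (mul_neg_of_neg_of_pos dA3 dA4)
  -- assembling
  have hgba : gap b a = n - km := by
    have := gap_add_gap (u := a) (v := b) hba.symm
    omega
  have hT1n1 : T1 ∉ DF V (Arc a (km + 1)) := by
    intro h
    rw [DF, Finset.mem_filter] at h
    have := h.2.1 (show c ∈ T1 by rw [hT1def]; simp)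
    rw [mem_arc_iff (by omega), gap_cast hLm1] at this
    omega
  have hT1n2 : T1 ∉ DF V (Arc b (L - km)) := by
    intro h
    rw [DF, Finset.mem_filter] at h
    have := h.2.1 (show a ∈ T1 by rw [hT1def]; simp)
    rw [mem_arc_iff (by omega), hgba] at this
    omega
  have hdisj : Disjoint (DF V (Arc a (km + 1))) (DF V (Arc b (L - km))) := by
    rw [Finset.disjoint_left]
    intro T h1 h2
    rw [DF, Finset.mem_filter] at h1 h2
    have hsub : T ⊆ {b} := by
      intro x hx
      have m1 := h1.2.1 hx
      have m2 := h2.2.1 hx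
      have g2 := hgap2 x m2
      rw [mem_arc_iff (by omega)] at m1 m2
      have : gap b x = 0 := by omega
      rw [Finset.mem_singleton, ← add_gap b x, this]; simp
    have := Finset.card_le_card hsub
    rw [h1.2.2.1] at this
    simp at this
  have hEeq : DF V (Arc a L) = insert T1 (DF V (Arc a (km + 1)) ∪ DF V (Arc b (L - km))) := by
    ext T
    rw [Finset.mem_insert, Finset.mem_union]
    constructor
    · intro hT
      by_cases h1 : T ∈ DF V (Arc a (km + 1))
      · exact Or.inr (Or.inl h1)
      by_cases h2 : T ∈ DF V (Arc b (L - km))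
      · exact Or.inr (Or.inr h2)
      · exact Or.inl (hcov T hT h1 h2)
    · rintro (rfl | hT | hT)
      · exact hT1mem
      · exact hE1sub hT
      · exact hE2sub hT
  have hT1notin : T1 ∉ DF V (Arc a (km + 1)) ∪ DF V (Arc b (L - km)) := by
    rw [Finset.mem_union]; rintro (h | h)
    · exact hT1n1 h
    · exact hT1n2 h
  constructor
  · rw [hEeq, Finset.card_insert_of_notMem hT1notin, Finset.card_union_of_disjoint hdisj,
      hcard1, hcard2]
    omega
  · intro T hT
    rw [hEeq, Finset.mem_insert, Finset.mem_union] at hT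
    rcases hT with rfl | hT | hT
    · exact hT1F
    · exact hglob1 T hT
    · exact hglob2 T hT

end mainf
-- chunk 7 : top-level constructions
section construct
variable {n : ℕ} [NeZero n] {V : ZMod n → Pt}

lemma constructE (hn : 4 ≤ n) (hconv : ConvexCCW V) (hgen : GenericPoly V) (a : ZMod n) :
    ∃ (b : ZMod n) (O1 : Pt), (1 ≤ gap a b ∧ gap a b ≤ n - 2) ∧
      d2 (V b) O1 = d2 (V a) O1 ∧ d2 (V (a + ((n - 1 : ℕ) : ZMod n))) O1 = d2 (V a) O1 ∧
      (∀ x : ZMod n, d2 (V a) O1 ≤ d2 (V x) O1) ∧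
      (∀ z : ZMod n, z ≠ a → z ≠ a + ((n - 1 : ℕ) : ZMod n) → z ≠ b →
        ¬ EmptyCircle V ({a, z, a + ((n - 1 : ℕ) : ZMod n)} : Finset (ZMod n))) := by
  set c := a + ((n - 1 : ℕ) : ZMod n) with hc
  have hLm1 : n - 1 < n := by omega
  have hca : c ≠ a := off_ne0 (by omega) hLm1
  have hVca : V a ≠ V c := fun h => hca (hconv.1 h).symm
  have hxrep : ∀ x : ZMod n, x = a + ((gap a x : ℕ) : ZMod n) := fun x => (add_gap a x).symm
  have hside_int : ∀ x : ZMod n, 0 < gap a x → gap a x < n - 1 → det2 (V a) (V c) (V x) < 0 := by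
    intro x h1 h2
    have h3 := chord_pos hn hconv (a := a) (i := gap a x) (j := n - 1) h1 h2 hLm1
    rw [← hxrep x, ← hc] at h3
    have h4 := det2_swap (V a) (V c) (V x)
    linarith
  have hpow : ∀ (s : ℝ) (x : ZMod n),
      d2 (V x) (pc (V a) (V c) s) - d2 (V a) (pc (V a) (V c) s)
        = pq (V a) (V c) (V x) - s * (2 * det2 (V a) (V c) (V x)) :=
    fun s x => pow_pc (V a) (V c) s (V x)
  have hitr_ne : (Finset.Icc 1 (n - 2)).Nonempty := ⟨1, by simp; omega⟩
  obtain ⟨km, hkm_mem, hkm_max⟩ := Finset.exists_max_image (Finset.Icc 1 (n - 2))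
    (fun k => tpar (V a) (V c) (V (a + (k : ZMod n)))) hitr_ne
  rw [Finset.mem_Icc] at hkm_mem
  set b := a + ((km : ℕ) : ZMod n) with hbdef
  have hgab : gap a b = km := gap_cast (by omega)
  set s1 := tpar (V a) (V c) (V b) with hs1
  set O1 := pc (V a) (V c) s1 with hO1
  have hdb : det2 (V a) (V c) (V b) < 0 := hside_int b (by omega) (by omega)
  have hO1b : d2 (V b) O1 = d2 (V a) O1 := by
    have h1 := hpow s1 b
    have h2 := pow_t_self (V a) (V c) (x := V b) (ne_of_lt hdb)
    rw [hO1]; rw [← hs1] at h2; linarith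
  have hO1c : d2 (V c) O1 = d2 (V a) O1 := (pc_equidist (V a) (V c) s1).symm
  have hba : b ≠ a := off_ne0 (by omega) (by omega)
  have hbc : b ≠ c := off_ne (by omega) hLm1 (by omega)
  have hO1min : ∀ x : ZMod n, d2 (V a) O1 ≤ d2 (V x) O1 := by
    intro x
    have hgx := gap_lt a x
    have hx := hpow s1 x
    rcases Nat.eq_zero_or_pos (gap a x) with h0 | h1
    · have hxa : x = a := by rw [hxrep x, h0]; simp
      rw [hxa]
    rcases eq_or_lt_of_le (show gap a x ≤ n - 1 by omega) with hLm | hint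
    · have hxc : x = c := by rw [hxrep x, hLm, ← hc]
      rw [hxc]; linarith [hO1c]
    · have hd := hside_int x h1 hint
      have hmax := hkm_max (gap a x) (Finset.mem_Icc.2 ⟨by omega, by omega⟩)
      rw [← hxrep x] at hmax
      have : 0 ≤ pq (V a) (V c) (V x) - s1 * (2 * det2 (V a) (V c) (V x)) :=
        (pow_t_neg (V a) (V c) hd s1).2 hmax
      rw [hO1]; linarith
  refine ⟨b, O1, ⟨by omega, by omega⟩, hO1b, hO1c, hO1min, ?_⟩
  intro z hza hzc hzb hEC
  obtain ⟨O', R', hm, hout⟩ := hEC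
  have hgz0 : gap a z ≠ 0 := fun h => hza (by rw [hxrep z, h]; simp)
  have hgzc : gap a z ≠ n - 1 := fun h => hzc (by rw [hxrep z, h, ← hc])
  have hgz := gap_lt a z
  have hdz : det2 (V a) (V c) (V z) < 0 := hside_int z (by omega) (by omega)
  have hR0 : 0 ≤ R' := by rw [← hm a (by simp)]; exact dist_nonneg
  have hma : d2 (V a) O' = R' ^ 2 := by rw [← dist_sq, hm a (by simp)]
  have hmz : d2 (V z) O' = R' ^ 2 := by rw [← dist_sq, hm z (by simp)]
  have hmc : d2 (V c) O' = R' ^ 2 := by rw [← dist_sq, hm c (by simp)]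
  obtain ⟨s0, hs0⟩ := exists_param (V a) (V c) hVca (hma.trans hmc.symm)
  have hz_on : d2 (V z) O' - d2 (V a) O' = 0 := by rw [hmz, hma]; ring
  rw [hs0, hpow s0 z] at hz_on
  have hself := pow_t_self (V a) (V c) (x := V z) (ne_of_lt hdz)
  have hs0z : s0 = tpar (V a) (V c) (V z) := by
    have h2 : (s0 - tpar (V a) (V c) (V z)) * (2 * det2 (V a) (V c) (V z)) = 0 := by
      linarith [hz_on, hself]
    rcases mul_eq_zero.1 h2 with h | h
    · linarith
    · linarith
  have hb_out : R' ^ 2 ≤ d2 (V b) O' := by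
    rw [← dist_sq]
    exact pow_le_pow_left₀ hR0 (hout b) 2
  have hb_pow : 0 ≤ pq (V a) (V c) (V b) - s0 * (2 * det2 (V a) (V c) (V b)) := by
    have h1 := hpow s0 b
    rw [← hs0] at h1
    linarith
  have h1 : s1 ≤ s0 := (pow_t_neg (V a) (V c) hdb s0).1 hb_pow
  have hz_pow1 : 0 ≤ pq (V a) (V c) (V z) - s1 * (2 * det2 (V a) (V c) (V z)) := by
    have h2 := hpow s1 z
    rw [← hO1] at h2
    linarith [hO1min z]
  have h2 : tpar (V a) (V c) (V z) ≤ s1 := (pow_t_neg (V a) (V c) hdz s1).1 hz_pow1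
  have h3 : d2 (V z) O1 = d2 (V a) O1 := by
    have h4 := hpow s1 z
    rw [← hO1] at h4
    have h5 : s1 = tpar (V a) (V c) (V z) := by linarith [hs0z]
    rw [h5] at h4
    linarith [hself]
  exact no_four_conc hgen hba.symm hca.symm (Ne.symm hza) hbc (Ne.symm hzb)
    (Ne.symm hzc) hO1b.symm hO1c.symm h3.symm

lemma constructF (hn : 4 ≤ n) (hconv : ConvexCCW V) (hgen : GenericPoly V) (a : ZMod n) :
    ∃ (b : ZMod n) (O1 : Pt), (1 ≤ gap a b ∧ gap a b ≤ n - 2) ∧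
      d2 (V b) O1 = d2 (V a) O1 ∧ d2 (V (a + ((n - 1 : ℕ) : ZMod n))) O1 = d2 (V a) O1 ∧
      (∀ x : ZMod n, x ≠ a → x ≠ a + ((n - 1 : ℕ) : ZMod n) → x ≠ b →
        d2 (V x) O1 < d2 (V a) O1) ∧
      (∀ z : ZMod n, z ≠ a → z ≠ a + ((n - 1 : ℕ) : ZMod n) → z ≠ b →
        ¬ FullCircle V ({a, z, a + ((n - 1 : ℕ) : ZMod n)} : Finset (ZMod n))) := by
  set c := a + ((n - 1 : ℕ) : ZMod n) with hc
  have hLm1 : n - 1 < n := by omega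
  have hca : c ≠ a := off_ne0 (by omega) hLm1
  have hVca : V a ≠ V c := fun h => hca (hconv.1 h).symm
  have hxrep : ∀ x : ZMod n, x = a + ((gap a x : ℕ) : ZMod n) := fun x => (add_gap a x).symm
  have hside_int : ∀ x : ZMod n, 0 < gap a x → gap a x < n - 1 → det2 (V a) (V c) (V x) < 0 := by
    intro x h1 h2
    have h3 := chord_pos hn hconv (a := a) (i := gap a x) (j := n - 1) h1 h2 hLm1
    rw [← hxrep x, ← hc] at h3
    have h4 := det2_swap (V a) (V c) (V x)
    linarith
  have hpow : ∀ (s : ℝ) (x : ZMod n),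
      d2 (V x) (pc (V a) (V c) s) - d2 (V a) (pc (V a) (V c) s)
        = pq (V a) (V c) (V x) - s * (2 * det2 (V a) (V c) (V x)) :=
    fun s x => pow_pc (V a) (V c) s (V x)
  have hitr_ne : (Finset.Icc 1 (n - 2)).Nonempty := ⟨1, by simp; omega⟩
  obtain ⟨km, hkm_mem, hkm_min⟩ := Finset.exists_min_image (Finset.Icc 1 (n - 2))
    (fun k => tpar (V a) (V c) (V (a + (k : ZMod n)))) hitr_ne
  rw [Finset.mem_Icc] at hkm_mem
  set b := a + ((km : ℕ) : ZMod n) with hbdef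
  have hgab : gap a b = km := gap_cast (by omega)
  set s1 := tpar (V a) (V c) (V b) with hs1
  set O1 := pc (V a) (V c) s1 with hO1
  have hdb : det2 (V a) (V c) (V b) < 0 := hside_int b (by omega) (by omega)
  have hO1b : d2 (V b) O1 = d2 (V a) O1 := by
    have h1 := hpow s1 b
    have h2 := pow_t_self (V a) (V c) (x := V b) (ne_of_lt hdb)
    rw [hO1]; rw [← hs1] at h2; linarith
  have hO1c : d2 (V c) O1 = d2 (V a) O1 := (pc_equidist (V a) (V c) s1).symm
  have hba : b ≠ a := off_ne0 (by omega) (by omega)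
  have hbc : b ≠ c := off_ne (by omega) hLm1 (by omega)
  have hO1max : ∀ x : ZMod n, x ≠ a → x ≠ c → x ≠ b → d2 (V x) O1 < d2 (V a) O1 := by
    intro x hxa hxc hxb
    have hgx := gap_lt a x
    have hgx0 : gap a x ≠ 0 := fun h => hxa (by rw [hxrep x, h]; simp)
    have hgxc : gap a x ≠ n - 1 := fun h => hxc (by rw [hxrep x, h, ← hc])
    have hgxb : gap a x ≠ km := fun h => hxb (by rw [hxrep x, h, ← hbdef])
    have hx := hpow s1 x
    have hd := hside_int x (by omega) (by omega)
    have hmin := hkm_min (gap a x) (Finset.mem_Icc.2 ⟨by omega, by omega⟩)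
    rw [← hxrep x] at hmin
    rcases eq_or_lt_of_le hmin with heq | hlt
    · exfalso
      have h2 := pow_t_self (V a) (V c) (x := V x) (ne_of_lt hd)
      rw [← heq] at h2
      have h3 : d2 (V x) O1 = d2 (V a) O1 := by rw [hO1]; linarith
      exact no_four_conc hgen hba.symm hca.symm (Ne.symm hxa) hbc (Ne.symm hxb)
        (Ne.symm hxc) hO1b.symm hO1c.symm h3.symm
    · have : pq (V a) (V c) (V x) - s1 * (2 * det2 (V a) (V c) (V x)) < 0 :=
        (pow_t_neg_lt (V a) (V c) hd s1).2 hlt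
      rw [hO1]; linarith
  refine ⟨b, O1, ⟨by omega, by omega⟩, hO1b, hO1c, hO1max, ?_⟩
  intro z hza hzc hzb hFC
  obtain ⟨O', R', hm, hin⟩ := hFC
  have hgz0 : gap a z ≠ 0 := fun h => hza (by rw [hxrep z, h]; simp)
  have hgzc : gap a z ≠ n - 1 := fun h => hzc (by rw [hxrep z, h, ← hc])
  have hgz := gap_lt a z
  have hdz : det2 (V a) (V c) (V z) < 0 := hside_int z (by omega) (by omega)
  have hR0 : 0 ≤ R' := by rw [← hm a (by simp)]; exact dist_nonneg
  have hma : d2 (V a) O' = R' ^ 2 := by rw [← dist_sq, hm a (by simp)]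
  have hmz : d2 (V z) O' = R' ^ 2 := by rw [← dist_sq, hm z (by simp)]
  have hmc : d2 (V c) O' = R' ^ 2 := by rw [← dist_sq, hm c (by simp)]
  obtain ⟨s0, hs0⟩ := exists_param (V a) (V c) hVca (hma.trans hmc.symm)
  have hz_on : d2 (V z) O' - d2 (V a) O' = 0 := by rw [hmz, hma]; ring
  rw [hs0, hpow s0 z] at hz_on
  have hself := pow_t_self (V a) (V c) (x := V z) (ne_of_lt hdz)
  have hs0z : s0 = tpar (V a) (V c) (V z) := by
    have h2 : (s0 - tpar (V a) (V c) (V z)) * (2 * det2 (V a) (V c) (V z)) = 0 := by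
      linarith [hz_on, hself]
    rcases mul_eq_zero.1 h2 with h | h
    · linarith
    · linarith
  have hbT : b ∉ ({a, z, c} : Finset (ZMod n)) := by
    rw [Finset.mem_insert, Finset.mem_insert, Finset.mem_singleton]
    push_neg
    exact ⟨hba, fun h => hzb h.symm, hbc⟩
  have hb_in : d2 (V b) O' < R' ^ 2 := by
    have h1 := hin b hbT
    rw [← dist_sq]
    nlinarith [dist_nonneg (x := V b) (y := O')]
  have hb_pow : pq (V a) (V c) (V b) - s0 * (2 * det2 (V a) (V c) (V b)) < 0 := by
    have h1 := hpow s0 b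
    rw [← hs0] at h1
    linarith
  have h1 : s0 < s1 := (pow_t_neg_lt (V a) (V c) hdb s0).1 hb_pow
  have hz_in : d2 (V z) O1 < d2 (V a) O1 := hO1max z hza hzc hzb
  have hz_pow1 : pq (V a) (V c) (V z) - s1 * (2 * det2 (V a) (V c) (V z)) < 0 := by
    have h2 := hpow s1 z
    rw [← hO1] at h2
    linarith
  have h2 : s1 < tpar (V a) (V c) (V z) := (pow_t_neg_lt (V a) (V c) hdz s1).1 hz_pow1
  rw [hs0z] at h1
  linarith

end construct
-- chunk 8 : counting
section count
variable {n : ℕ} [NeZero n] {V : ZMod n → Pt}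

def adjCount (T : Finset (ZMod n)) : ℕ := (T.filter (fun x => x + 1 ∈ T)).card

lemma adjPairs_eq_adjCount (T : Finset (ZMod n)) : adjPairs T = adjCount T := by
  rw [adjPairs]
  have hset : {p : ZMod n × ZMod n | p.1 ∈ T ∧ p.2 ∈ T ∧ p.2 = p.1 + 1}
      = ↑((T.filter (fun x => x + 1 ∈ T)).image (fun x => (x, x + 1))) := by
    ext ⟨p1, p2⟩
    simp only [Set.mem_setOf_eq, Finset.coe_image, Set.mem_image, Finset.mem_coe,
      Finset.mem_filter]
    constructor
    · rintro ⟨h1, h2, h3⟩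
      exact ⟨p1, ⟨h1, by rw [← h3]; exact h2⟩, by rw [h3]⟩
    · rintro ⟨x, ⟨hx1, hx2⟩, heq⟩
      rw [Prod.mk.injEq] at heq
      obtain ⟨rfl, rfl⟩ := heq
      exact ⟨hx1, hx2, rfl⟩
  rw [hset, Set.ncard_coe_finset, adjCount,
    Finset.card_image_of_injective _ (fun x y h => by simpa using congrArg Prod.fst h)]

lemma filterE_eq (hn : 4 ≤ n) :
    DE V (Arc (0 : ZMod n) n)
      = Finset.univ.filter (fun T : Finset (ZMod n) => T.card = 3 ∧ EmptyCircle V T) := by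
  ext T
  rw [DE, Finset.mem_filter, Finset.mem_filter]
  constructor
  · rintro ⟨h0, hsub, h3, hAE⟩
    refine ⟨h0, h3, ?_⟩
    obtain ⟨O, R, h1, h2⟩ := hAE
    exact ⟨O, R, h1, fun j => h2 j (by rw [arc_univ]; exact Finset.mem_univ j)⟩
  · rintro ⟨h0, h3, hE⟩
    exact ⟨h0, by rw [arc_univ]; exact Finset.subset_univ T, h3, emptyCircle_of_arc V hE _⟩

lemma filterF_eq (hn : 4 ≤ n) :
    DF V (Arc (0 : ZMod n) n)
      = Finset.univ.filter (fun T : Finset (ZMod n) => T.card = 3 ∧ FullCircle V T) := by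
  ext T
  rw [DF, Finset.mem_filter, Finset.mem_filter]
  constructor
  · rintro ⟨h0, hsub, h3, hAF⟩
    refine ⟨h0, h3, ?_⟩
    obtain ⟨O, R, h1, h2⟩ := hAF
    exact ⟨O, R, h1, fun j hj => h2 j (by rw [arc_univ]; exact Finset.mem_univ j) hj⟩
  · rintro ⟨h0, h3, hE⟩
    exact ⟨h0, by rw [arc_univ]; exact Finset.subset_univ T, h3, fullCircle_of_arc V hE _⟩

lemma countE (hn : 4 ≤ n) (hconv : ConvexCCW V) (hgen : GenericPoly V) :
    (Finset.univ.filter (fun T : Finset (ZMod n) => T.card = 3 ∧ EmptyCircle V T)).card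
      = n - 2 := by
  obtain ⟨b, O1, hb, hO1b, hO1c, hO1min, -⟩ := constructE hn hconv hgen 0
  have h := (mainE hn hconv hgen n (by omega) le_rfl 0 O1 hO1c.symm hO1min).1
  rwa [filterE_eq hn] at h

lemma countF (hn : 4 ≤ n) (hconv : ConvexCCW V) (hgen : GenericPoly V) :
    (Finset.univ.filter (fun T : Finset (ZMod n) => T.card = 3 ∧ FullCircle V T)).card
      = n - 2 := by
  obtain ⟨b, O1, hb, hO1b, hO1c, hO1max, -⟩ := constructF hn hconv hgen 0
  have hwit : ∀ x : ZMod n, x ≠ 0 → x ≠ (0 : ZMod n) + ((n - 1 : ℕ) : ZMod n) →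
      d2 (V x) O1 ≤ d2 (V 0) O1 := by
    intro x h1 h2
    by_cases h3 : x = b
    · rw [h3, hO1b]
    · exact (hO1max x h1 h2 h3).le
  have h := (mainF hn hconv hgen n (by omega) le_rfl 0 O1 hO1c.symm hwit).1
  rwa [filterF_eq hn] at h

lemma edgeE (hn : 4 ≤ n) (hconv : ConvexCCW V) (hgen : GenericPoly V) (i : ZMod n) :
    ∃! T : Finset (ZMod n), (T.card = 3 ∧ EmptyCircle V T) ∧ i ∈ T ∧ i + 1 ∈ T := by
  obtain ⟨b, O1, ⟨hb1, hb2⟩, hO1b, hO1c, hO1min, huniq⟩ := constructE hn hconv hgen (i + 1)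
  set a := i + 1 with ha
  set c := a + ((n - 1 : ℕ) : ZMod n) with hc
  have hci : c = i := by
    rw [hc]
    have h1 : ((n - 1 : ℕ) : ZMod n) = -1 := by
      rw [Nat.cast_sub (by omega : 1 ≤ n), ZMod.natCast_self]; push_cast; ring
    rw [h1, ha]; ring
  have hgac : gap a c = n - 1 := by rw [hc]; exact gap_cast (by omega)
  have hca : c ≠ a := off_ne0 (by omega) (by omega)
  have hba : b ≠ a := by
    intro h; rw [h, gap_self] at hb1; omega
  have hbc : b ≠ c := by
    intro h; rw [h, hgac] at hb2; omega
  have hT1card : ({a, b, c} : Finset (ZMod n)).card = 3 := trip_card hba hbc hca.symm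
  have hT1E : EmptyCircle V ({a, b, c} : Finset (ZMod n)) := by
    refine ⟨O1, dist (V a) O1, ?_, fun j => dist_le_iff.2 (hO1min j)⟩
    intro v hv
    rw [Finset.mem_insert, Finset.mem_insert, Finset.mem_singleton] at hv
    rcases hv with rfl | rfl | rfl
    · rfl
    · exact dist_eq_iff.2 hO1b
    · exact dist_eq_iff.2 hO1c
  refine ⟨({a, b, c} : Finset (ZMod n)), ⟨⟨hT1card, hT1E⟩, by rw [hci]; simp, by rw [ha]; simp⟩, ?_⟩
  rintro T' ⟨⟨h3', hE'⟩, hi', hi1'⟩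
  obtain ⟨z, hza, hzc, hTeq⟩ := three_elt h3' (show a ∈ T' by rw [ha]; exact hi1')
    (show c ∈ T' by rw [hci]; exact hi') hca.symm
  by_cases hzb : z = b
  · rw [hTeq, hzb]
  · exfalso
    apply huniq z hza hzc hzb
    rw [← hTeq]
    exact hE'

lemma edgeF (hn : 4 ≤ n) (hconv : ConvexCCW V) (hgen : GenericPoly V) (i : ZMod n) :
    ∃! T : Finset (ZMod n), (T.card = 3 ∧ FullCircle V T) ∧ i ∈ T ∧ i + 1 ∈ T := by
  obtain ⟨b, O1, ⟨hb1, hb2⟩, hO1b, hO1c, hO1max, huniq⟩ := constructF hn hconv hgen (i + 1)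
  set a := i + 1 with ha
  set c := a + ((n - 1 : ℕ) : ZMod n) with hc
  have hci : c = i := by
    rw [hc]
    have h1 : ((n - 1 : ℕ) : ZMod n) = -1 := by
      rw [Nat.cast_sub (by omega : 1 ≤ n), ZMod.natCast_self]; push_cast; ring
    rw [h1, ha]; ring
  have hgac : gap a c = n - 1 := by rw [hc]; exact gap_cast (by omega)
  have hca : c ≠ a := off_ne0 (by omega) (by omega)
  have hba : b ≠ a := by
    intro h; rw [h, gap_self] at hb1; omega
  have hbc : b ≠ c := by
    intro h; rw [h, hgac] at hb2; omega
  have hT1card : ({a, b, c} : Finset (ZMod n)).card = 3 := trip_card hba hbc hca.symm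
  have hT1F : FullCircle V ({a, b, c} : Finset (ZMod n)) := by
    refine ⟨O1, dist (V a) O1, ?_, ?_⟩
    · intro v hv
      rw [Finset.mem_insert, Finset.mem_insert, Finset.mem_singleton] at hv
      rcases hv with rfl | rfl | rfl
      · rfl
      · exact dist_eq_iff.2 hO1b
      · exact dist_eq_iff.2 hO1c
    · intro j hj
      rw [Finset.mem_insert, Finset.mem_insert, Finset.mem_singleton] at hj
      push_neg at hj
      exact dist_lt_iff.2 (hO1max j hj.1 hj.2.2 hj.2.1)
  refine ⟨({a, b, c} : Finset (ZMod n)), ⟨⟨hT1card, hT1F⟩, by rw [hci]; simp, by rw [ha]; simp⟩, ?_⟩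
  rintro T' ⟨⟨h3', hF'⟩, hi', hi1'⟩
  obtain ⟨z, hza, hzc, hTeq⟩ := three_elt h3' (show a ∈ T' by rw [ha]; exact hi1')
    (show c ∈ T' by rw [hci]; exact hi') hca.symm
  by_cases hzb : z = b
  · rw [hTeq, hzb]
  · exfalso
    apply huniq z hza hzc hzb
    rw [← hTeq]
    exact hF'

lemma sum_adj (hn : 4 ≤ n) (DD : Finset (Finset (ZMod n)))
    (huniq : ∀ i : ZMod n, ∃! T : Finset (ZMod n), T ∈ DD ∧ i ∈ T ∧ i + 1 ∈ T) :
    ∑ T ∈ DD, adjCount T = n := by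
  have h1 : ∀ T : Finset (ZMod n),
      adjCount T = (Finset.univ.filter (fun i : ZMod n => i ∈ T ∧ i + 1 ∈ T)).card := by
    intro T
    rw [adjCount]
    congr 1
    ext x
    simp only [Finset.mem_filter, Finset.mem_univ, true_and]
  calc ∑ T ∈ DD, adjCount T
      = ∑ T ∈ DD, ∑ i : ZMod n, (if i ∈ T ∧ i + 1 ∈ T then 1 else 0) := by
        refine Finset.sum_congr rfl ?_
        intro T _
        rw [h1, Finset.card_filter]
    _ = ∑ i : ZMod n, ∑ T ∈ DD, (if i ∈ T ∧ i + 1 ∈ T then 1 else 0) := Finset.sum_comm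
    _ = ∑ i : ZMod n, (DD.filter (fun T => i ∈ T ∧ i + 1 ∈ T)).card := by
        refine Finset.sum_congr rfl ?_
        intro i _
        rw [Finset.card_filter]
    _ = ∑ _i : ZMod n, 1 := by
        refine Finset.sum_congr rfl ?_
        intro i _
        obtain ⟨T0, hT0, hT0u⟩ := huniq i
        rw [Finset.card_eq_one]
        refine ⟨T0, ?_⟩
        ext T
        rw [Finset.mem_filter, Finset.mem_singleton]
        constructor
        · intro h; exact hT0u T ⟨h.1, h.2⟩
        · intro h; rw [h]; exact ⟨hT0.1, hT0.2⟩
    _ = n := by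
        rw [Finset.sum_const, Finset.card_univ, ZMod.card n]; simp

lemma adjCount_le_two (hn : 4 ≤ n) {T : Finset (ZMod n)} (h3 : T.card = 3) :
    adjCount T ≤ 2 := by
  by_contra h
  push_neg at h
  have hsub : T.filter (fun x => x + 1 ∈ T) ⊆ T := Finset.filter_subset _ _
  have hfeq : T.filter (fun x => x + 1 ∈ T) = T := by
    apply Finset.eq_of_subset_of_card_le hsub
    rw [h3]
    rw [adjCount] at h
    omega
  have hcl : ∀ x ∈ T, x + 1 ∈ T := by
    intro x hx
    have : x ∈ T.filter (fun x => x + 1 ∈ T) := by rw [hfeq]; exact hx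
    exact (Finset.mem_filter.1 this).2
  obtain ⟨x0, hx0⟩ := Finset.card_pos.1 (show 0 < T.card by omega)
  have hone : (1 : ZMod n) = ((1 : ℕ) : ZMod n) := by push_cast; ring
  have hadd : ∀ k : ℕ, x0 + ((k : ℕ) : ZMod n) + 1 = x0 + ((k + 1 : ℕ) : ZMod n) := by
    intro k; push_cast; ring
  have h0 : x0 + ((0 : ℕ) : ZMod n) = x0 := by push_cast; ring
  have hx1 : x0 + ((1 : ℕ) : ZMod n) ∈ T := by
    rw [← hadd 0, h0]; exact hcl x0 hx0
  have hx2 : x0 + ((2 : ℕ) : ZMod n) ∈ T := by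
    rw [← hadd 1]; exact hcl _ hx1
  have hx3 : x0 + ((3 : ℕ) : ZMod n) ∈ T := by
    rw [← hadd 2]; exact hcl _ hx2
  have hTsub : ({x0, x0 + ((1 : ℕ) : ZMod n), x0 + ((2 : ℕ) : ZMod n)} : Finset (ZMod n)) ⊆ T := by
    intro w hw
    rw [Finset.mem_insert, Finset.mem_insert, Finset.mem_singleton] at hw
    rcases hw with rfl | rfl | rfl
    · exact hx0
    · exact hx1
    · exact hx2
  have hd01 : x0 + ((1 : ℕ) : ZMod n) ≠ x0 := off_ne0 (by omega) (by omega)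
  have hd02 : x0 + ((2 : ℕ) : ZMod n) ≠ x0 := off_ne0 (by omega) (by omega)
  have hd12 : x0 + ((1 : ℕ) : ZMod n) ≠ x0 + ((2 : ℕ) : ZMod n) := off_ne (by omega) (by omega) (by omega)
  have hcard3 : ({x0, x0 + ((1 : ℕ) : ZMod n), x0 + ((2 : ℕ) : ZMod n)} : Finset (ZMod n)).card = 3 :=
    trip_card hd01 hd12 hd02.symm
  have hTeq : T = ({x0, x0 + ((1 : ℕ) : ZMod n), x0 + ((2 : ℕ) : ZMod n)} : Finset (ZMod n)) :=
    (Finset.eq_of_subset_of_card_le hTsub (by omega)).symm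
  rw [hTeq, Finset.mem_insert, Finset.mem_insert, Finset.mem_singleton] at hx3
  rcases hx3 with h' | h' | h'
  · exact off_ne0 (show 0 < 3 by omega) (by omega) h'
  · exact off_ne (by omega) (by omega) (by omega) h'
  · exact off_ne (by omega) (by omega) (by omega) h'

lemma parts (hn : 4 ≤ n) (DD : Finset (Finset (ZMod n)))
    (hcards : ∀ T ∈ DD, T.card = 3)
    (htot : DD.card = n - 2) (hsum : ∑ T ∈ DD, adjCount T = n) :
    ((DD.filter (fun T => adjCount T = 2)).card
        = (DD.filter (fun T => adjCount T = 0)).card + 2) ∧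
    ((DD.filter (fun T => adjCount T = 2)).card + (DD.filter (fun T => adjCount T = 0)).card
        + (DD.filter (fun T => adjCount T = 1)).card = n - 2) := by
  have hle : ∀ T ∈ DD, adjCount T ≤ 2 := fun T hT => adjCount_le_two hn (hcards T hT)
  have hcover : DD = (DD.filter (fun T => adjCount T = 2) ∪ DD.filter (fun T => adjCount T = 1))
      ∪ DD.filter (fun T => adjCount T = 0) := by
    ext T
    simp only [Finset.mem_union, Finset.mem_filter]
    constructor
    · intro hT
      have := hle T hT
      interval_cases h : adjCount T
      · exact Or.inr ⟨hT, rfl⟩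
      · exact Or.inl (Or.inr ⟨hT, rfl⟩)
      · exact Or.inl (Or.inl ⟨hT, rfl⟩)
    · rintro ((⟨h, -⟩ | ⟨h, -⟩) | ⟨h, -⟩) <;> exact h
  have hd1 : Disjoint (DD.filter (fun T => adjCount T = 2)) (DD.filter (fun T => adjCount T = 1)) := by
    rw [Finset.disjoint_left]
    intro T h1 h2
    rw [Finset.mem_filter] at h1 h2
    omega
  have hd2 : Disjoint ((DD.filter (fun T => adjCount T = 2)) ∪ (DD.filter (fun T => adjCount T = 1)))
      (DD.filter (fun T => adjCount T = 0)) := by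
    rw [Finset.disjoint_left]
    intro T h1 h2
    rw [Finset.mem_union] at h1
    rw [Finset.mem_filter] at h2
    rcases h1 with h1 | h1 <;> rw [Finset.mem_filter] at h1 <;> omega
  have hcards' : DD.card = (DD.filter (fun T => adjCount T = 2)).card
      + (DD.filter (fun T => adjCount T = 1)).card
      + (DD.filter (fun T => adjCount T = 0)).card := by
    conv_lhs => rw [hcover]
    rw [Finset.card_union_of_disjoint hd2, Finset.card_union_of_disjoint hd1]
  have hsum' : ∑ T ∈ DD, adjCount T
      = 2 * (DD.filter (fun T => adjCount T = 2)).card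
        + (DD.filter (fun T => adjCount T = 1)).card := by
    conv_lhs => rw [hcover]
    rw [Finset.sum_union hd2, Finset.sum_union hd1]
    have e2 : ∑ T ∈ DD.filter (fun T => adjCount T = 2), adjCount T
        = 2 * (DD.filter (fun T => adjCount T = 2)).card := by
      rw [Finset.sum_congr rfl (fun T hT => (Finset.mem_filter.1 hT).2), Finset.sum_const]
      ring
    have e1 : ∑ T ∈ DD.filter (fun T => adjCount T = 1), adjCount T
        = (DD.filter (fun T => adjCount T = 1)).card := by
      rw [Finset.sum_congr rfl (fun T hT => (Finset.mem_filter.1 hT).2), Finset.sum_const]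
      ring
    have e0 : ∑ T ∈ DD.filter (fun T => adjCount T = 0), adjCount T = 0 := by
      rw [Finset.sum_congr rfl (fun T hT => (Finset.mem_filter.1 hT).2), Finset.sum_const]
      ring
    rw [e2, e1, e0]
    ring
  rw [htot] at hcards'
  rw [hsum] at hsum'
  omega

end count
/-- Bose's theorem: for a generic convex polygon with `n ≥ 4` vertices,
`s₊ = t₊ + 2`, `s₋ = t₋ + 2`, and `s₊ + t₊ + u₊ = s₋ + t₋ + u₋ = n - 2`, where
`s, t, u` count full/empty circles through neighboring, disjoint, intermediate
triples of vertices respectively. -/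
theorem bose_theorem
    (n : ℕ) [NeZero n] (hn : 4 ≤ n)
    (V : ZMod n → Pt) (hconv : ConvexCCW V) (hgen : GenericPoly V) :
    ({T : Finset (ZMod n) | T.card = 3 ∧ FullCircle V T ∧ adjPairs T = 2}.ncard =
      {T : Finset (ZMod n) | T.card = 3 ∧ FullCircle V T ∧ adjPairs T = 0}.ncard + 2) ∧
    ({T : Finset (ZMod n) | T.card = 3 ∧ EmptyCircle V T ∧ adjPairs T = 2}.ncard =
      {T : Finset (ZMod n) | T.card = 3 ∧ EmptyCircle V T ∧ adjPairs T = 0}.ncard + 2) ∧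
    ({T : Finset (ZMod n) | T.card = 3 ∧ FullCircle V T ∧ adjPairs T = 2}.ncard +
      {T : Finset (ZMod n) | T.card = 3 ∧ FullCircle V T ∧ adjPairs T = 0}.ncard +
      {T : Finset (ZMod n) | T.card = 3 ∧ FullCircle V T ∧ adjPairs T = 1}.ncard
        = n - 2) ∧
    ({T : Finset (ZMod n) | T.card = 3 ∧ EmptyCircle V T ∧ adjPairs T = 2}.ncard +
      {T : Finset (ZMod n) | T.card = 3 ∧ EmptyCircle V T ∧ adjPairs T = 0}.ncard +
      {T : Finset (ZMod n) | T.card = 3 ∧ EmptyCircle V T ∧ adjPairs T = 1}.ncard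
        = n - 2) := by
  classical
  set DDE := Finset.univ.filter (fun T : Finset (ZMod n) => T.card = 3 ∧ EmptyCircle V T) with hDDE
  set DDF := Finset.univ.filter (fun T : Finset (ZMod n) => T.card = 3 ∧ FullCircle V T) with hDDF
  have convE : ∀ k : ℕ, {T : Finset (ZMod n) | T.card = 3 ∧ EmptyCircle V T ∧ adjPairs T = k}.ncard
      = (DDE.filter (fun T => adjCount T = k)).card := by
    intro k
    have hh : {T : Finset (ZMod n) | T.card = 3 ∧ EmptyCircle V T ∧ adjPairs T = k}
        = ↑(DDE.filter (fun T => adjCount T = k)) := by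
      ext T
      simp only [Set.mem_setOf_eq, Finset.coe_filter, hDDE, Finset.mem_filter,
        Finset.mem_univ, true_and, adjPairs_eq_adjCount]
      tauto
    rw [hh, Set.ncard_coe_finset]
  have convF : ∀ k : ℕ, {T : Finset (ZMod n) | T.card = 3 ∧ FullCircle V T ∧ adjPairs T = k}.ncard
      = (DDF.filter (fun T => adjCount T = k)).card := by
    intro k
    have hh : {T : Finset (ZMod n) | T.card = 3 ∧ FullCircle V T ∧ adjPairs T = k}
        = ↑(DDF.filter (fun T => adjCount T = k)) := by
      ext T
      simp only [Set.mem_setOf_eq, Finset.coe_filter, hDDF, Finset.mem_filter,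
        Finset.mem_univ, true_and, adjPairs_eq_adjCount]
      tauto
    rw [hh, Set.ncard_coe_finset]
  have hcardsE : ∀ T ∈ DDE, T.card = 3 := by
    intro T hT; rw [hDDE, Finset.mem_filter] at hT; exact hT.2.1
  have hcardsF : ∀ T ∈ DDF, T.card = 3 := by
    intro T hT; rw [hDDF, Finset.mem_filter] at hT; exact hT.2.1
  have huniqE : ∀ i : ZMod n, ∃! T : Finset (ZMod n), T ∈ DDE ∧ i ∈ T ∧ i + 1 ∈ T := by
    intro i
    obtain ⟨T0, h0, hu⟩ := edgeE hn hconv hgen i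
    refine ⟨T0, ⟨by rw [hDDE, Finset.mem_filter]; exact ⟨Finset.mem_univ _, h0.1⟩, h0.2.1, h0.2.2⟩, ?_⟩
    intro T hT
    rw [hDDE, Finset.mem_filter] at hT
    exact hu T ⟨hT.1.2, hT.2⟩
  have huniqF : ∀ i : ZMod n, ∃! T : Finset (ZMod n), T ∈ DDF ∧ i ∈ T ∧ i + 1 ∈ T := by
    intro i
    obtain ⟨T0, h0, hu⟩ := edgeF hn hconv hgen i
    refine ⟨T0, ⟨by rw [hDDF, Finset.mem_filter]; exact ⟨Finset.mem_univ _, h0.1⟩, h0.2.1, h0.2.2⟩, ?_⟩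
    intro T hT
    rw [hDDF, Finset.mem_filter] at hT
    exact hu T ⟨hT.1.2, hT.2⟩
  have pE := parts hn DDE hcardsE (countE hn hconv hgen) (sum_adj hn DDE huniqE)
  have pF := parts hn DDF hcardsF (countF hn hconv hgen) (sum_adj hn DDF huniqF)
  refine ⟨?_, ?_, ?_, ?_⟩
  · rw [convF 2, convF 0]; exact pF.1
  · rw [convE 2, convE 0]; exact pE.1
  · rw [convF 2, convF 0, convF 1]; exact pF.2
  · rw [convE 2, convE 0, convE 1]; exact pE.2
end
end

section
/- Let A, B, C, X′ be four points in the Euclidean plane ℝ² in generic arrangement (no three of them collinear and not all four on a common circle). Let C_B be the circle through A, B, C, let C_A be the circle through X′, A, B, let H⁺_{AB} be the open half-plane bounded by the line AB that contains C, and let H⁻_{AB} be the opposite open half-plane. Then: (i) if X′ lies strictly inside C_B and in H⁺_{AB}, then C lies strictly outside C_A; (ii) if X′ lies in H⁺_{AB} and strictly outside C_B, then C lies strictly inside C_A; (iii) if X′ lies strictly inside C_B and in H⁻_{AB}, then C lies strictly inside C_A; (iv) if X′ lies in H⁻_{AB} and strictly outside C_B, then C lies strictly outside C_A. -/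
open EuclideanGeometry
open scoped Classical

lemma sq_dist' (x y : Pt) : dist x y ^ 2 = (x 0 - y 0)^2 + (x 1 - y 1)^2 := by
  rw [EuclideanSpace.dist_eq, Real.sq_sqrt (by positivity)]
  simp [Fin.sum_univ_two, Real.dist_eq, sq_abs]

lemma collinear_of_det2_eq_zero' (a b c : Pt) (h : det2 a b c = 0) :
    Collinear ℝ ({a, b, c} : Set Pt) := by
  rcases eq_or_ne b a with rfl | hba
  · have : ({b, b, c} : Set Pt) = {b, c} := by simp
    rw [this]; exact collinear_pair ℝ b c
  · simp only [det2] at h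
    have hcoord : b 0 ≠ a 0 ∨ b 1 ≠ a 1 := by
      by_contra hc
      push_neg at hc
      exact hba (by ext i; fin_cases i <;> simp [hc.1, hc.2])
    rw [collinear_iff_of_mem (Set.mem_insert a _)]
    refine ⟨b - a, fun p hp => ?_⟩
    have key : ∀ r : ℝ, c 0 - a 0 = r * (b 0 - a 0) → c 1 - a 1 = r * (b 1 - a 1) →
        ∃ r : ℝ, c = r • (b - a) +ᵥ a := by
      intro r h0 h1
      refine ⟨r, ?_⟩
      ext i
      fin_cases i
      · show c 0 = (r • (b - a) +ᵥ a) 0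
        simp only [vadd_eq_add, PiLp.add_apply, PiLp.smul_apply, PiLp.sub_apply,
          smul_eq_mul]
        linarith [h0]
      · show c 1 = (r • (b - a) +ᵥ a) 1
        simp only [vadd_eq_add, PiLp.add_apply, PiLp.smul_apply, PiLp.sub_apply,
          smul_eq_mul]
        linarith [h1]
    rcases hp with rfl | rfl | rfl
    · exact ⟨0, by simp⟩
    · exact ⟨1, by ext i; fin_cases i <;> simp⟩
    · rcases hcoord with h0 | h1
      · have hne : b 0 - a 0 ≠ 0 := sub_ne_zero.mpr h0
        refine key ((p 0 - a 0) / (b 0 - a 0))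
          (by rw [div_mul_cancel₀ _ hne]) ?_
        rw [div_mul_eq_mul_div, eq_div_iff hne]
        linear_combination h
      · have hne : b 1 - a 1 ≠ 0 := sub_ne_zero.mpr h1
        refine key ((p 1 - a 1) / (b 1 - a 1)) ?_
          (by rw [div_mul_cancel₀ _ hne])
        rw [div_mul_eq_mul_div, eq_div_iff hne]
        linear_combination -h

lemma aux_pos' (u v p q : ℝ) (hv : v ≠ 0) (key : u * p + v * q = 0)
    (h : 0 < u * v * (-p)) : 0 < q := by
  have h' : v ^ 2 * q = u * v * (-p) := by linear_combination v * key
  have hv2 : 0 < v ^ 2 := by positivity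
  nlinarith [h', h, hv2]

lemma aux_neg' (u v p q : ℝ) (hv : v ≠ 0) (key : u * p + v * q = 0)
    (h : u * v * (-p) < 0) : q < 0 := by
  have := aux_pos' (-u) v p (-q) hv (by linear_combination -key) (by nlinarith [h])
  linarith

/-- Proposition on circles: let `A B C X'` be four points in generic arrangement, `C_B`
the circle (center `OB`, radius `RB`) through `A, B, C`, and `C_A` the circle (center
`OA`, radius `RA`) through `X', A, B`.  Writing membership in the open half-plane
`H⁺_{AB}` (the side of line `AB` containing `C`) as `0 < det2 A B C * det2 A B X'`:
(i) `X'` inside `C_B` and in `H⁺` implies `C` outside `C_A`;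
(ii) `X'` in `H⁺` and outside `C_B` implies `C` inside `C_A`;
(iii) `X'` inside `C_B` and in `H⁻` implies `C` inside `C_A`;
(iv) `X'` in `H⁻` and outside `C_B` implies `C` outside `C_A`. -/
theorem circle_halfplane_prop
    (A B C X' OB OA : Pt) (RB RA : ℝ)
    (h1 : ¬ Collinear ℝ ({A, B, C} : Set Pt))
    (h2 : ¬ Collinear ℝ ({A, B, X'} : Set Pt))
    (h3 : ¬ Collinear ℝ ({A, C, X'} : Set Pt))
    (h4 : ¬ Collinear ℝ ({B, C, X'} : Set Pt))
    (h5 : ¬ ∃ (O : Pt) (R : ℝ),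
        dist A O = R ∧ dist B O = R ∧ dist C O = R ∧ dist X' O = R)
    (hB : dist A OB = RB ∧ dist B OB = RB ∧ dist C OB = RB)
    (hA : dist X' OA = RA ∧ dist A OA = RA ∧ dist B OA = RA) :
    (dist X' OB < RB → 0 < det2 A B C * det2 A B X' → RA < dist C OA) ∧
    (0 < det2 A B C * det2 A B X' → RB < dist X' OB → dist C OA < RA) ∧
    (dist X' OB < RB → det2 A B C * det2 A B X' < 0 → dist C OA < RA) ∧
    (det2 A B C * det2 A B X' < 0 → RB < dist X' OB → RA < dist C OA) := by
  obtain ⟨hBA, hBB, hBC⟩ := hB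
  obtain ⟨hAX, hAA, hAB⟩ := hA
  have hRB0 : 0 ≤ RB := hBA ▸ dist_nonneg
  have hRA0 : 0 ≤ RA := hAX ▸ dist_nonneg
  have eA : (A 0 - OB 0)^2 + (A 1 - OB 1)^2 = RB^2 := by rw [← sq_dist', hBA]
  have eB : (B 0 - OB 0)^2 + (B 1 - OB 1)^2 = RB^2 := by rw [← sq_dist', hBB]
  have eC : (C 0 - OB 0)^2 + (C 1 - OB 1)^2 = RB^2 := by rw [← sq_dist', hBC]
  have eX : (X' 0 - OA 0)^2 + (X' 1 - OA 1)^2 = RA^2 := by rw [← sq_dist', hAX]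
  have eA' : (A 0 - OA 0)^2 + (A 1 - OA 1)^2 = RA^2 := by rw [← sq_dist', hAA]
  have eB' : (B 0 - OA 0)^2 + (B 1 - OA 1)^2 = RA^2 := by rw [← sq_dist', hAB]
  have hv : det2 A B X' ≠ 0 := fun h => h2 (collinear_of_det2_eq_zero' _ _ _ h)
  have key : det2 A B C * (dist X' OB ^ 2 - RB^2)
      + det2 A B X' * (dist C OA ^ 2 - RA^2) = 0 := by
    rw [sq_dist', sq_dist']
    simp only [det2]
    linear_combination
      ((C 0 - B 0) * (X' 1 - B 1) - (C 1 - B 1) * (X' 0 - B 0)) * eA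
      - ((C 0 - A 0) * (X' 1 - A 1) - (C 1 - A 1) * (X' 0 - A 0)) * eB
      + ((B 0 - A 0) * (X' 1 - A 1) - (B 1 - A 1) * (X' 0 - A 0)) * eC
      + ((B 0 - A 0) * (C 1 - A 1) - (B 1 - A 1) * (C 0 - A 0)) * eX
      - ((C 0 - B 0) * (X' 1 - B 1) - (C 1 - B 1) * (X' 0 - B 0)) * eA'
      + ((C 0 - A 0) * (X' 1 - A 1) - (C 1 - A 1) * (X' 0 - A 0)) * eB'
  have dX0 : (0:ℝ) ≤ dist X' OB := dist_nonneg
  have dC0 : (0:ℝ) ≤ dist C OA := dist_nonneg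
  refine ⟨?_, ?_, ?_, ?_⟩
  · intro hx hs
    have hp : dist X' OB ^ 2 - RB^2 < 0 :=
      sub_neg.mpr (pow_lt_pow_left₀ hx dX0 two_ne_zero)
    have hq := aux_pos' _ _ _ _ hv key (mul_pos hs (by linarith))
    exact lt_of_pow_lt_pow_left₀ 2 dC0 (by linarith [hq])
  · intro hs hx
    have hp : 0 < dist X' OB ^ 2 - RB^2 :=
      sub_pos.mpr (pow_lt_pow_left₀ hx hRB0 two_ne_zero)
    have hq := aux_neg' _ _ _ _ hv key (mul_neg_of_pos_of_neg hs (by linarith))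
    exact lt_of_pow_lt_pow_left₀ 2 hRA0 (by linarith [hq])
  · intro hx hs
    have hp : dist X' OB ^ 2 - RB^2 < 0 :=
      sub_neg.mpr (pow_lt_pow_left₀ hx dX0 two_ne_zero)
    have hq := aux_neg' _ _ _ _ hv key (mul_neg_of_neg_of_pos hs (by linarith))
    exact lt_of_pow_lt_pow_left₀ 2 hRA0 (by linarith [hq])
  · intro hs hx
    have hp : 0 < dist X' OB ^ 2 - RB^2 :=
      sub_pos.mpr (pow_lt_pow_left₀ hx hRB0 two_ne_zero)
    have hq := aux_pos' _ _ _ _ hv key (mul_pos_of_neg_of_neg hs (by linarith))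
    exact lt_of_pow_lt_pow_left₀ 2 dC0 (by linarith [hq])
end
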